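/- arXiv:2006.03223 — 4 statements merged into one kernel-verified Lean document; each statement's English description precedes it below -/
import Mathlib

section
/- Let q be a harmonic homogeneous polynomial of degree m on ℝ^d and p a homogeneous polynomial of degree l on ℝ^d. If l - m is negative or odd, then ∫_{S^{d-1}} q(y) p(y) dσ(y) = 0. -/
open MeasureTheory MvPolynomial Finset Metric Topology Asymptotics Real

noncomputable section

/-- Euclidean space `ℝ^d`. -/
abbrev Ed (d : ℕ) := EuclideanSpace ℝ (Fin d)

/-- Multi-index partial derivative on polynomials. -/
def mpderiv {d : ℕ} (s : Fin d →₀ ℕ) (p : MvPolynomial (Fin d) ℝ) : MvPolynomial (Fin d) ℝ :=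
  ((List.finRange d).map (fun j => (fun q : MvPolynomial (Fin d) ℝ => pderiv j q)^[s j])).foldr
    (fun g h => g ∘ h) id p

/-- The constant-coefficient differential operator `q(∇)` acting on polynomials. -/
def dop {d : ℕ} (q p : MvPolynomial (Fin d) ℝ) : MvPolynomial (Fin d) ℝ :=
  (AddMonoidAlgebra.coeff q).sum fun s c => c • mpderiv s p

/-- The Euclidean Laplacian on polynomials. -/
def lap {d : ℕ} (p : MvPolynomial (Fin d) ℝ) : MvPolynomial (Fin d) ℝ :=
  ∑ j : Fin d, pderiv j (pderiv j p)

/-- First-order partial derivative `∂/∂x_j` on functions. -/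
def pdF {d : ℕ} (j : Fin d) (f : Ed d → ℝ) : Ed d → ℝ :=
  fun x => fderiv ℝ f x (EuclideanSpace.single j 1)

/-- Multi-index partial derivative on functions. -/
def mpdF {d : ℕ} (s : Fin d →₀ ℕ) (f : Ed d → ℝ) : Ed d → ℝ :=
  ((List.finRange d).map (fun j => (pdF j)^[s j])).foldr (fun g h => g ∘ h) id f

/-- The operator `q(∇)` acting on smooth functions. -/
def dopF {d : ℕ} (q : MvPolynomial (Fin d) ℝ) (f : Ed d → ℝ) : Ed d → ℝ :=
  fun x => (AddMonoidAlgebra.coeff q).sum fun s c => c * mpdF s f x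

/-- The Euclidean Laplacian on functions. -/
def lapF {d : ℕ} (f : Ed d → ℝ) : Ed d → ℝ :=
  fun x => ∑ j : Fin d, pdF j (pdF j f) x

/-- The surface measure `σ` on the unit sphere `S^{d-1}`. -/
def sphμ (d : ℕ) : Measure (sphere (0 : Ed d) 1) := (volume : Measure (Ed d)).toSphere

/-- The surface area `ω_d` of the unit sphere `S^{d-1}`. -/
def ωd (d : ℕ) : ℝ := ((sphμ d) Set.univ).toReal

/-- The Pochhammer (shifted factorial) symbol `(a)_k`. -/
def poch (a : ℝ) (k : ℕ) : ℝ := ∏ i ∈ Finset.range k, (a + i)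

/-- Evaluation of a polynomial at a point of `ℝ^d`. -/
def evalE {d : ℕ} (p : MvPolynomial (Fin d) ℝ) (x : Ed d) : ℝ := eval (fun j => x j) p

/-- The polynomial `‖x‖² = x_1² + ⋯ + x_d²`. -/
def nsq (d : ℕ) : MvPolynomial (Fin d) ℝ := ∑ j : Fin d, X j ^ 2

namespace Stmt1Aux

variable {d : ℕ}

/-! ### Basic `pderiv` and `lap` lemmas -/

lemma pderiv_comm (i j : Fin d) (p : MvPolynomial (Fin d) ℝ) :
    pderiv i (pderiv j p) = pderiv j (pderiv i p) := by
  induction p using MvPolynomial.induction_on' with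
  | monomial s a =>
    simp only [pderiv_monomial]
    rcases eq_or_ne i j with rfl | hij
    · rfl
    · rw [tsub_tsub, tsub_tsub, add_comm (Finsupp.single j 1)]
      congr 1
      rw [Finsupp.tsub_apply, Finsupp.tsub_apply, Finsupp.single_eq_of_ne' hij,
        Finsupp.single_eq_of_ne' (Ne.symm hij)]
      simp only [Nat.sub_zero]
      ring
  | add p q hp hq => simp only [map_add, hp, hq]

lemma lap_add (p q : MvPolynomial (Fin d) ℝ) : lap (p + q) = lap p + lap q := by
  simp [lap, map_add, Finset.sum_add_distrib]

lemma lap_zero : lap (0 : MvPolynomial (Fin d) ℝ) = 0 := by simp [lap]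

lemma lap_sum {ι : Type*} (s : Finset ι) (f : ι → MvPolynomial (Fin d) ℝ) :
    lap (∑ i ∈ s, f i) = ∑ i ∈ s, lap (f i) := by
  classical
  induction s using Finset.induction_on with
  | empty => simp [lap_zero]
  | insert _ _ h ih => rw [Finset.sum_insert h, lap_add, ih, Finset.sum_insert h]

lemma lap_pderiv (i : Fin d) (p : MvPolynomial (Fin d) ℝ) :
    lap (pderiv i p) = pderiv i (lap p) := by
  simp only [lap, map_sum]
  refine Finset.sum_congr rfl fun j _ => ?_
  rw [pderiv_comm j i p, pderiv_comm j i (pderiv j p)]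

end Stmt1Aux

namespace Stmt1Aux
variable {d : ℕ}

/-! ### Degree bookkeeping -/

lemma degree_eq_sum_univ (s : Fin d →₀ ℕ) : s.degree = ∑ i : Fin d, s i :=
  Finset.sum_subset (Finset.subset_univ _)
    (fun i _ hi => Finsupp.notMem_support_iff.mp hi)

lemma mem_support_degree {p : MvPolynomial (Fin d) ℝ} {n : ℕ} (hp : p.IsHomogeneous n)
    {α : Fin d →₀ ℕ} (hα : α ∈ p.support) : α.degree = n := by
  by_contra h
  exact (MvPolynomial.mem_support_iff.mp hα) (hp.coeff_eq_zero h)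

lemma degree_tsub_single (α : Fin d →₀ ℕ) (i : Fin d) (h : α i ≠ 0) :
    (α - Finsupp.single i 1).degree = α.degree - 1 := by
  rw [degree_eq_sum_univ, degree_eq_sum_univ,
    ← Finset.add_sum_erase _ _ (Finset.mem_univ i), ← Finset.add_sum_erase _ α (Finset.mem_univ i)]
  have h1 : (α - Finsupp.single i 1 : Fin d →₀ ℕ) i = α i - 1 := by
    simp [Finsupp.tsub_apply]
  have h2 : ∑ j ∈ Finset.univ.erase i, (α - Finsupp.single i 1 : Fin d →₀ ℕ) j
      = ∑ j ∈ Finset.univ.erase i, α j := by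
    refine Finset.sum_congr rfl fun j hj => ?_
    rw [Finsupp.tsub_apply, Finsupp.single_eq_of_ne' (Finset.ne_of_mem_erase hj).symm,
      Nat.sub_zero]
  rw [h1, h2]
  omega

/-! ### Homogeneity and `pderiv`/`lap` -/

lemma pderiv_isHomogeneous {p : MvPolynomial (Fin d) ℝ} {n : ℕ} (i : Fin d)
    (hp : p.IsHomogeneous n) : (pderiv i p).IsHomogeneous (n - 1) := by
  conv_lhs => rw [← p.support_sum_monomial_coeff]
  rw [map_sum]
  refine IsHomogeneous.sum _ _ _ fun α hα => ?_
  rw [pderiv_monomial]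
  by_cases h0 : α i = 0
  · rw [h0]
    simp only [Nat.cast_zero, mul_zero, map_zero]
    exact isHomogeneous_zero _ _ _
  · exact isHomogeneous_monomial _ (by rw [degree_tsub_single α i h0, mem_support_degree hp hα])

lemma isHomog_zero_eq_C {p : MvPolynomial (Fin d) ℝ} (hp : p.IsHomogeneous 0) :
    p = C (coeff 0 p) := by
  ext α
  rcases eq_or_ne α 0 with rfl | h
  · simp
  · rw [hp.coeff_eq_zero (by simpa [Finsupp.degree_eq_zero_iff] using h), coeff_C,
      if_neg (Ne.symm h)]

lemma pderiv_of_isHomog_zero {p : MvPolynomial (Fin d) ℝ} (i : Fin d)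
    (hp : p.IsHomogeneous 0) : pderiv i p = 0 := by
  rw [isHomog_zero_eq_C hp]; exact pderiv_C

lemma lap_isHomogeneous {p : MvPolynomial (Fin d) ℝ} {n : ℕ} (hp : p.IsHomogeneous n) :
    (lap p).IsHomogeneous (n - 2) := by
  refine IsHomogeneous.sum _ _ _ fun j _ => ?_
  have := pderiv_isHomogeneous j (pderiv_isHomogeneous j hp)
  rwa [Nat.sub_sub] at this

lemma lap_small {p : MvPolynomial (Fin d) ℝ} {n : ℕ} (hp : p.IsHomogeneous n) (hn : n ≤ 1) :
    lap p = 0 := by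
  refine Finset.sum_eq_zero fun j _ => ?_
  have h0 : (pderiv j p).IsHomogeneous 0 := by
    have := pderiv_isHomogeneous j hp
    rwa [show n - 1 = 0 by omega] at this
  simp [pderiv_of_isHomog_zero j h0]

lemma lap_iter_add (N : ℕ) (p q : MvPolynomial (Fin d) ℝ) :
    lap^[N] (p + q) = lap^[N] p + lap^[N] q := by
  induction N generalizing p q with
  | zero => rfl
  | succ N ih => rw [Function.iterate_succ_apply, Function.iterate_succ_apply,
      Function.iterate_succ_apply, lap_add, ih]

lemma lap_iter_zero (N : ℕ) : lap^[N] (0 : MvPolynomial (Fin d) ℝ) = 0 :=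
  Function.iterate_fixed lap_zero N

lemma lap_iter_sum {ι : Type*} (N : ℕ) (s : Finset ι) (f : ι → MvPolynomial (Fin d) ℝ) :
    lap^[N] (∑ i ∈ s, f i) = ∑ i ∈ s, lap^[N] (f i) := by
  classical
  induction s using Finset.induction_on with
  | empty => simp [lap_iter_zero]
  | insert _ _ h ih => rw [Finset.sum_insert h, lap_iter_add, ih, Finset.sum_insert h]

lemma lap_iter_isHomogeneous {p : MvPolynomial (Fin d) ℝ} {n : ℕ} (hp : p.IsHomogeneous n)
    (N : ℕ) : (lap^[N] p).IsHomogeneous (n - 2 * N) := by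
  induction N generalizing p n with
  | zero => simpa using hp
  | succ N ih =>
    rw [Function.iterate_succ_apply]
    have := ih (lap_isHomogeneous hp)
    rwa [show n - 2 - 2 * N = n - 2 * (N + 1) by omega] at this

lemma lap_iter_eq_zero {p : MvPolynomial (Fin d) ℝ} {n : ℕ} (hp : p.IsHomogeneous n)
    {N : ℕ} (hN : n < 2 * N) : lap^[N] p = 0 := by
  induction N generalizing p n with
  | zero => omega
  | succ N ih =>
    rw [Function.iterate_succ_apply]
    rcases le_or_gt n 1 with h | h
    · rw [lap_small hp h, lap_iter_zero]
    · exact ih (lap_isHomogeneous hp) (by omega)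

lemma lap_mul (a b : MvPolynomial (Fin d) ℝ) :
    lap (a * b) = lap a * b + a * lap b + 2 * ∑ j : Fin d, pderiv j a * pderiv j b := by
  have h : ∀ j : Fin d, pderiv j (pderiv j (a * b)) =
      pderiv j (pderiv j a) * b + a * pderiv j (pderiv j b)
        + 2 * (pderiv j a * pderiv j b) := by
    intro j
    simp only [pderiv_mul, map_add]
    ring
  show ∑ j : Fin d, pderiv j (pderiv j (a * b)) = _
  rw [Finset.sum_congr rfl fun j _ => h j, Finset.sum_add_distrib, Finset.sum_add_distrib,
    ← Finset.sum_mul, ← Finset.mul_sum, ← Finset.mul_sum]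
  rfl

lemma lemmaL : ∀ (N : ℕ) (q u : MvPolynomial (Fin d) ℝ) (m k : ℕ),
    lap q = 0 → q.IsHomogeneous m → u.IsHomogeneous k → k < m → m + k = 2 * N →
    lap^[N] (q * u) = 0 := by
  intro N
  induction N with
  | zero => intro q u m k _ _ _ h1 h2; omega
  | succ N ih =>
    intro q u m k hq hqm huk hkm hmk
    rw [Function.iterate_succ_apply, lap_mul, hq, zero_mul, zero_add, lap_iter_add, two_mul,
      lap_iter_add, lap_iter_sum]
    have hm2 : 2 ≤ m := by omega
    have hterm1 : lap^[N] (q * lap u) = 0 := by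
      rcases le_or_gt k 1 with hk | hk
      · rw [lap_small huk hk, mul_zero, lap_iter_zero]
      · exact ih q (lap u) m (k - 2) hq hqm (lap_isHomogeneous huk) (by omega) (by omega)
    have hterm2 : ∀ j : Fin d, lap^[N] (pderiv j q * pderiv j u) = 0 := by
      intro j
      rcases Nat.eq_zero_or_pos k with hk | hk
      · subst hk
        rw [pderiv_of_isHomog_zero j huk, mul_zero, lap_iter_zero]
      · refine ih (pderiv j q) (pderiv j u) (m - 1) (k - 1) ?_ (pderiv_isHomogeneous j hqm)
          (pderiv_isHomogeneous j huk) (by omega) (by omega)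
        rw [lap_pderiv, hq, map_zero]
    rw [hterm1, Finset.sum_eq_zero fun j _ => hterm2 j]
    simp

end Stmt1Aux

namespace Stmt1Aux
variable {d : ℕ}

/-! ### One-dimensional Gaussian moments -/

def G (n : ℕ) : ℝ := ∫ x : ℝ, x ^ n * Real.exp (-x ^ 2)

lemma G_integrable (n : ℕ) : Integrable fun x : ℝ => x ^ n * Real.exp (-x ^ 2) := by
  have := integrable_rpow_mul_exp_neg_mul_sq (b := 1) one_pos
    (s := (n : ℝ)) (neg_one_lt_zero.trans_le (Nat.cast_nonneg n))
  simpa [Real.rpow_natCast, neg_one_mul] using this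

lemma G_odd {n : ℕ} (hn : Odd n) : G n = 0 := by
  have h : ∫ x : ℝ, (-x) ^ n * Real.exp (-(-x) ^ 2) = G n :=
    integral_neg_eq_self (fun x : ℝ => x ^ n * Real.exp (-x ^ 2)) volume
  have h2 : ∫ x : ℝ, (-x) ^ n * Real.exp (-(-x) ^ 2) = -G n := by
    have : (fun x : ℝ => (-x) ^ n * Real.exp (-(-x) ^ 2))
        = fun x : ℝ => -(x ^ n * Real.exp (-x ^ 2)) := by
      funext x
      rw [hn.neg_pow, neg_sq]
      ring
    rw [this, integral_neg]
    rfl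
  have := h.symm.trans h2
  linarith

lemma G_even {n : ℕ} (hn : Even n) : G n = Real.Gamma (((n : ℝ) + 1) / 2) := by
  have h1 : G n = 2 * ∫ x in Set.Ioi (0 : ℝ), x ^ n * Real.exp (-x ^ 2) := by
    rw [← integral_comp_abs (f := fun x => x ^ n * Real.exp (-x ^ 2))]
    refine integral_congr_ae (Filter.Eventually.of_forall fun x => ?_)
    simp only [hn.pow_abs, sq_abs]
  have h2 : ∫ x in Set.Ioi (0 : ℝ), x ^ n * Real.exp (-x ^ 2)
      = (1 / 2) * Real.Gamma (((n : ℝ) + 1) / 2) := by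
    rw [← integral_rpow_mul_exp_neg_rpow two_pos
      (neg_one_lt_zero.trans_le (Nat.cast_nonneg n) : (-1:ℝ) < (n:ℝ))]
    refine setIntegral_congr_fun measurableSet_Ioi fun x _ => ?_
    rw [Real.rpow_natCast, show ((2:ℝ)) = ((2:ℕ):ℝ) by norm_num, Real.rpow_natCast]
  rw [h1, h2]
  ring

lemma G_rec (n : ℕ) : G (n + 2) = (((n : ℝ) + 1) / 2) * G n := by
  rcases Nat.even_or_odd n with hn | hn
  · rw [G_even hn, G_even (by rcases hn with ⟨k,hk⟩; exact ⟨k+1, by omega⟩), show (((n + 2 : ℕ) : ℝ) + 1) / 2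
      = ((n : ℝ) + 1) / 2 + 1 by push_cast; ring, Real.Gamma_add_one (by positivity)]
  · rw [G_odd hn, G_odd (by rcases hn with ⟨k,hk⟩; exact ⟨k+1, by omega⟩), mul_zero]

lemma G_key (k : ℕ) : (k : ℝ) * ((k - 1 : ℕ) : ℝ) * G (k - 2) = 2 * (k : ℝ) * G k := by
  match k with
  | 0 => simp
  | 1 => simp [G_odd odd_one]
  | (j + 2) =>
    rw [show j + 2 - 2 = j by omega, show j + 2 - 1 = j + 1 by omega, G_rec j]
    push_cast
    ring

/-! ### The Gaussian-moment functional on polynomials -/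

def Gmom (p : MvPolynomial (Fin d) ℝ) : ℝ := (AddMonoidAlgebra.coeff p).sum fun α c => c * ∏ i, G (α i)

lemma Gmom_zero : Gmom (0 : MvPolynomial (Fin d) ℝ) = 0 := Finsupp.sum_zero_index

lemma Gmom_monomial (α : Fin d →₀ ℕ) (c : ℝ) :
    Gmom (monomial α c) = c * ∏ i, G (α i) := by
  rw [Gmom, ← single_eq_monomial, AddMonoidAlgebra.coeff_single, Finsupp.sum_single_index]
  simp

lemma Gmom_add (p q : MvPolynomial (Fin d) ℝ) : Gmom (p + q) = Gmom p + Gmom q :=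
  Finsupp.sum_add_index' (fun α => by simp) (fun α c₁ c₂ => add_mul _ _ _)

lemma Gmom_sum {ι : Type*} (s : Finset ι) (f : ι → MvPolynomial (Fin d) ℝ) :
    Gmom (∑ i ∈ s, f i) = ∑ i ∈ s, Gmom (f i) := by
  classical
  induction s using Finset.induction_on with
  | empty => simp [Gmom_zero]
  | insert _ _ h ih => rw [Finset.sum_insert h, Gmom_add, ih, Finset.sum_insert h]

lemma Gmom_lap_monomial (s : Fin d →₀ ℕ) (a : ℝ) :
    Gmom (lap (monomial s a)) = 2 * (s.degree : ℝ) * Gmom (monomial s a) := by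
  have hterm : ∀ j : Fin d, pderiv j (pderiv j (monomial s a))
      = monomial (s - Finsupp.single j 2) (a * (s j : ℝ) * ((s j - 1 : ℕ) : ℝ)) := by
    intro j
    rw [pderiv_monomial, pderiv_monomial, tsub_tsub, ← Finsupp.single_add]
    congr 2
    rw [Finsupp.tsub_apply, Finsupp.single_eq_same]
  have hGprod : ∀ j : Fin d, (∏ i, G ((s - Finsupp.single j 2 : Fin d →₀ ℕ) i))
      = G (s j - 2) * ∏ i ∈ Finset.univ.erase j, G (s i) := by
    intro j
    rw [← Finset.mul_prod_erase _ _ (Finset.mem_univ j)]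
    congr 1
    · congr 1
      rw [Finsupp.tsub_apply, Finsupp.single_eq_same]
    · refine Finset.prod_congr rfl fun i hi => ?_
      rw [Finsupp.tsub_apply, Finsupp.single_eq_of_ne' (Finset.ne_of_mem_erase hi).symm,
        Nat.sub_zero]
  have key : ∀ j : Fin d,
      (a * (s j : ℝ) * ((s j - 1 : ℕ) : ℝ)) * ∏ i, G ((s - Finsupp.single j 2 : Fin d →₀ ℕ) i)
      = 2 * (s j : ℝ) * (a * ∏ i, G (s i)) := by
    intro j
    have huniv : (∏ i, G (s i)) = G (s j) * ∏ i ∈ Finset.univ.erase j, G (s i) :=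
      (Finset.mul_prod_erase _ _ (Finset.mem_univ j)).symm
    rw [hGprod j, huniv]
    have hk := G_key (s j)
    set P := ∏ i ∈ Finset.univ.erase j, G (s i)
    linear_combination (a * P) * hk
  show Gmom (∑ j : Fin d, pderiv j (pderiv j (monomial s a))) = _
  rw [Finset.sum_congr rfl fun j _ => hterm j, Gmom_sum]
  simp only [Gmom_monomial]
  rw [Finset.sum_congr rfl fun j (_ : j ∈ Finset.univ) => key j, ← Finset.sum_mul,
    degree_eq_sum_univ]
  push_cast
  rw [← Finset.mul_sum]

lemma Gmom_lap {p : MvPolynomial (Fin d) ℝ} {n : ℕ} (hp : p.IsHomogeneous n) :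
    Gmom (lap p) = 2 * (n : ℝ) * Gmom p := by
  conv_lhs => rw [← p.support_sum_monomial_coeff]
  conv_rhs => rw [← p.support_sum_monomial_coeff]
  rw [lap_sum, Gmom_sum, Gmom_sum, Finset.mul_sum]
  refine Finset.sum_congr rfl fun α hα => ?_
  rw [Gmom_lap_monomial, mem_support_degree hp hα]

lemma claimC : ∀ (n : ℕ) (p : MvPolynomial (Fin d) ℝ), p.IsHomogeneous n →
    (∀ k, MvPolynomial.coeff 0 (lap^[k] p) = 0) → Gmom p = 0 := by
  intro n
  induction n using Nat.strong_induction_on with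
  | _ n ih =>
    intro p hp h0
    rcases Nat.eq_zero_or_pos n with rfl | hn
    · have hp0 : p = 0 := by
        rw [isHomog_zero_eq_C hp]
        have := h0 0
        simp only [Function.iterate_zero_apply] at this
        rw [this, map_zero]
      rw [hp0, Gmom_zero]
    · have hl : Gmom (lap p) = 0 :=
        ih (n - 2) (by omega) (lap p) (lap_isHomogeneous hp)
          (fun k => by rw [← Function.iterate_succ_apply]; exact h0 (k + 1))
      have h2 : 2 * (n : ℝ) * Gmom p = 0 := by rw [← Gmom_lap hp, hl]
      have hne : (2 : ℝ) * (n : ℝ) ≠ 0 := by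
        have : (0:ℝ) < n := by exact_mod_cast hn
        positivity
      exact (mul_eq_zero.mp h2).resolve_left hne

end Stmt1Aux

namespace Stmt1Aux
variable {d : ℕ}

lemma evalE_smul {D : ℕ} {f : MvPolynomial (Fin d) ℝ} (hf : f.IsHomogeneous D) (r : ℝ)
    (x : Ed d) : evalE f (r • x) = r ^ D * evalE f x := by
  unfold evalE
  have hx : (fun j => (r • x) j) = fun j => r * x j := rfl
  rw [hx, eval_eq', eval_eq', Finset.mul_sum]
  refine Finset.sum_congr rfl fun α hα => ?_
  have h1 : ∏ i, (r * x i) ^ α i = (∏ i, r ^ α i) * ∏ i, (x i) ^ α i := by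
    rw [← Finset.prod_mul_distrib]
    exact Finset.prod_congr rfl fun i _ => mul_pow _ _ _
  rw [h1, Finset.prod_pow_eq_pow_sum, ← degree_eq_sum_univ, mem_support_degree hf hα]
  ring

lemma integral_gauss_eq_Gmom (f : MvPolynomial (Fin d) ℝ) :
    ∫ x : Ed d, evalE f x * Real.exp (-‖x‖ ^ 2) = Gmom f := by
  have hmp := (EuclideanSpace.volume_preserving_symm_measurableEquiv_toLp (Fin d)).symm
  rw [← hmp.integral_comp (MeasurableEquiv.measurableEmbedding _)]
  have key : ∀ y : Fin d → ℝ,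
      evalE f ((MeasurableEquiv.toLp 2 (Fin d → ℝ)).symm.symm y) *
        Real.exp (-‖(MeasurableEquiv.toLp 2 (Fin d → ℝ)).symm.symm y‖ ^ 2)
      = ∑ α ∈ f.support, MvPolynomial.coeff α f *
          ∏ i, ((y i) ^ (α i) * Real.exp (-(y i) ^ 2)) := by
    intro y
    have hcoord : ∀ j, ((MeasurableEquiv.toLp 2 (Fin d → ℝ)).symm.symm y) j = y j := fun j => rfl
    have hnorm : ‖(MeasurableEquiv.toLp 2 (Fin d → ℝ)).symm.symm y‖ ^ 2 = ∑ i, (y i) ^ 2 := by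
      rw [EuclideanSpace.norm_eq]
      rw [Real.sq_sqrt (Finset.sum_nonneg fun i _ => by positivity)]
      exact Finset.sum_congr rfl fun i _ => by rw [hcoord, Real.norm_eq_abs, sq_abs]
    have hexp : Real.exp (-‖(MeasurableEquiv.toLp 2 (Fin d → ℝ)).symm.symm y‖ ^ 2)
        = ∏ i, Real.exp (-(y i) ^ 2) := by
      rw [hnorm, ← Finset.sum_neg_distrib, Real.exp_sum]
    have heval : evalE f ((MeasurableEquiv.toLp 2 (Fin d → ℝ)).symm.symm y)
        = ∑ α ∈ f.support, MvPolynomial.coeff α f * ∏ i, (y i) ^ (α i) := by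
      unfold evalE
      rw [show (fun j => ((MeasurableEquiv.toLp 2 (Fin d → ℝ)).symm.symm y) j) = y from rfl,
        eval_eq']
    rw [heval, hexp, Finset.sum_mul]
    refine Finset.sum_congr rfl fun α _ => ?_
    rw [mul_assoc, ← Finset.prod_mul_distrib]
  rw [integral_congr_ae (Filter.Eventually.of_forall key), integral_finset_sum _
    (fun α _ => ((Integrable.fintype_prod
      (f := fun i => fun t : ℝ => t ^ (α i) * Real.exp (-t ^ 2))
      (fun i => G_integrable (α i))).const_mul _))]
  rw [Gmom, Finsupp.sum]
  refine Finset.sum_congr rfl fun α _ => ?_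
  rw [integral_const_mul, MeasureTheory.integral_fintype_prod_volume_eq_prod (ι := Fin d)
    (fun i => fun t : ℝ => t ^ (α i) * Real.exp (-t ^ 2))]
  rfl

end Stmt1Aux

namespace Stmt1Aux
variable {d : ℕ}

lemma polar (hd : 1 ≤ d) {D : ℕ} (f : MvPolynomial (Fin d) ℝ) (hf : f.IsHomogeneous D) :
    ∫ x : Ed d, evalE f x * Real.exp (-‖x‖ ^ 2)
      = (∫ y : sphere (0 : Ed d) 1, evalE f (y : Ed d) ∂(sphμ d)) *
        ((1 / 2) * Real.Gamma (((d : ℝ) + D) / 2)) := by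
  haveI : NeZero d := ⟨by omega⟩
  have dimeq : Module.finrank ℝ (Ed d) = d := finrank_euclideanSpace_fin
  set F : Ed d → ℝ := fun x => evalE f x * Real.exp (-‖x‖ ^ 2) with hF
  have h1 : ∫ x : Ed d, F x
      = ∫ x : ({(0 : Ed d)}ᶜ : Set (Ed d)), F x ∂((volume : Measure (Ed d)).comap Subtype.val) := by
    rw [integral_subtype_comap (measurableSet_singleton _).compl F,
      MeasureTheory.restrict_compl_singleton]
  have h2 : ∫ x : ({(0 : Ed d)}ᶜ : Set (Ed d)), F x ∂((volume : Measure (Ed d)).comap Subtype.val)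
      = ∫ z : sphere (0 : Ed d) 1 × Set.Ioi (0 : ℝ),
          F ((homeomorphUnitSphereProd (Ed d)).symm z : Ed d)
          ∂((volume : Measure (Ed d)).toSphere.prod
            (Measure.volumeIoiPow (Module.finrank ℝ (Ed d) - 1))) := by
    rw [← MeasurePreserving.integral_comp
      (volume : Measure (Ed d)).measurePreserving_homeomorphUnitSphereProd
      (Homeomorph.measurableEmbedding _)
      (fun z => F ((homeomorphUnitSphereProd (Ed d)).symm z : Ed d))]
    refine integral_congr_ae (Filter.Eventually.of_forall fun x => ?_)
    simp only [Homeomorph.symm_apply_apply]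
  have h3 : ∀ z : sphere (0 : Ed d) 1 × Set.Ioi (0 : ℝ),
      F ((homeomorphUnitSphereProd (Ed d)).symm z : Ed d)
      = evalE f (z.1 : Ed d) * ((z.2 : ℝ) ^ D * Real.exp (-(z.2 : ℝ) ^ 2)) := by
    rintro ⟨y, r⟩
    have hsymm : ((homeomorphUnitSphereProd (Ed d)).symm (y, r) : Ed d)
        = (r : ℝ) • (y : Ed d) := rfl
    rw [hF]
    simp only [hsymm]
    rw [evalE_smul hf]
    have hny : ‖(y : Ed d)‖ = 1 := mem_sphere_zero_iff_norm.mp y.2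
    have hnr : ‖(r : ℝ) • (y : Ed d)‖ = (r : ℝ) := by
      rw [norm_smul, hny, mul_one, Real.norm_eq_abs, abs_of_pos (Set.mem_Ioi.mp r.2)]
    rw [hnr]
    ring
  have h4 : ∫ z : sphere (0 : Ed d) 1 × Set.Ioi (0 : ℝ),
      evalE f (z.1 : Ed d) * ((z.2 : ℝ) ^ D * Real.exp (-(z.2 : ℝ) ^ 2))
      ∂((volume : Measure (Ed d)).toSphere.prod (Measure.volumeIoiPow (d - 1)))
      = (∫ y : sphere (0 : Ed d) 1, evalE f (y : Ed d) ∂((volume : Measure (Ed d)).toSphere)) *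
        ∫ r : Set.Ioi (0 : ℝ), ((r : ℝ) ^ D * Real.exp (-(r : ℝ) ^ 2))
          ∂(Measure.volumeIoiPow (d - 1)) :=
    integral_prod_mul (fun y : sphere (0 : Ed d) 1 => evalE f (y : Ed d))
      (fun r : Set.Ioi (0 : ℝ) => ((r : ℝ) ^ D * Real.exp (-(r : ℝ) ^ 2)))
  have h5 : ∫ r : Set.Ioi (0 : ℝ), ((r : ℝ) ^ D * Real.exp (-(r : ℝ) ^ 2))
        ∂(Measure.volumeIoiPow (d - 1))
      = ∫ r in Set.Ioi (0 : ℝ), r ^ (d - 1) • (r ^ D * Real.exp (-r ^ 2)) := by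
    simp only [Measure.volumeIoiPow, ENNReal.ofReal]
    rw [integral_withDensity_eq_integral_smul
        ((measurable_subtype_coe.pow_const _).real_toNNReal),
      integral_subtype_comap measurableSet_Ioi
        (fun a : ℝ => Real.toNNReal (a ^ (d - 1)) • (a ^ D * Real.exp (-a ^ 2)))]
    refine setIntegral_congr_fun measurableSet_Ioi fun x hx => ?_
    rw [NNReal.smul_def, Real.coe_toNNReal _ (pow_nonneg (le_of_lt hx) _)]
  have hcast : (((d - 1 + D : ℕ) : ℝ) + 1) / 2 = ((d : ℝ) + D) / 2 := by
    push_cast [Nat.cast_sub hd]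
    ring
  have h6 : ∫ r in Set.Ioi (0 : ℝ), r ^ (d - 1) • (r ^ D * Real.exp (-r ^ 2))
      = (1 / 2) * Real.Gamma (((d : ℝ) + D) / 2) := by
    rw [← hcast, ← integral_rpow_mul_exp_neg_rpow two_pos
      (neg_one_lt_zero.trans_le (Nat.cast_nonneg _))]
    refine setIntegral_congr_fun measurableSet_Ioi fun x _ => ?_
    rw [Real.rpow_natCast, show ((2:ℝ)) = ((2:ℕ):ℝ) by norm_num, Real.rpow_natCast,
      smul_eq_mul, ← mul_assoc, ← pow_add]
  rw [h1, h2, dimeq]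
  rw [integral_congr_ae (Filter.Eventually.of_forall h3), h4, h5, h6]
  rfl

end Stmt1Aux


open Stmt1Aux in
/-- the spherical integral of a product of a harmonic homogeneous polynomial of
degree `m` and a homogeneous polynomial of degree `l` vanishes when `l - m` is negative or odd. -/
theorem stmt1 (d m l : ℕ) (hd : 1 ≤ d)
    (q p : MvPolynomial (Fin d) ℝ)
    (hqhom : q.IsHomogeneous m) (hqharm : lap q = 0)
    (hphom : p.IsHomogeneous l)
    (hlm : (l : ℤ) - (m : ℤ) < 0 ∨ Odd ((l : ℤ) - (m : ℤ))) :
    ∫ y : sphere (0 : Ed d) 1, evalE q (y : Ed d) * evalE p (y : Ed d) ∂(sphμ d) = 0 := by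
  have hqp : (q * p).IsHomogeneous (m + l) := hqhom.mul hphom
  have hcoeff : ∀ k, MvPolynomial.coeff 0 (lap^[k] (q * p)) = 0 := by
    intro k
    rcases lt_trichotomy (2 * k) (m + l) with h | h | h
    · exact (lap_iter_isHomogeneous hqp k).coeff_eq_zero
        (by rw [map_zero]; omega)
    · have hlm' : l < m := by
        rcases hlm with hneg | ⟨t, ht⟩
        · omega
        · omega
      rw [lemmaL k q p m l hqharm hqhom hphom hlm' (by omega)]
      simp
    · rw [lap_iter_eq_zero hqp h]
      simp
  have hG : Gmom (q * p) = 0 := claimC (m + l) (q * p) hqp hcoeff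
  have hpolar := polar hd (q * p) hqp
  rw [integral_gauss_eq_Gmom, hG] at hpolar
  have hΓ : (0 : ℝ) < (1 / 2) * Real.Gamma (((d : ℝ) + (m + l : ℕ)) / 2) := by
    have h1 : (0 : ℝ) < ((d : ℝ) + (m + l : ℕ)) / 2 := by positivity
    have := Real.Gamma_pos_of_pos h1
    linarith
  have hS : (∫ y : sphere (0 : Ed d) 1, evalE (q * p) (y : Ed d) ∂(sphμ d)) = 0 := by
    rcases mul_eq_zero.mp hpolar.symm with h | h
    · exact h
    · exact absurd h hΓ.ne'
  rw [← hS]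
  refine integral_congr_ae (Filter.Eventually.of_forall fun y => ?_)
  simp [evalE, map_mul]
end
end

section
/- Let q be a harmonic homogeneous polynomial of degree m on ℝ^d and let j be a non-negative integer. If j < m, then q(∇) applied to the function x ↦ ‖x‖^{2j} is identically zero; if j ≥ m, then q(∇) ‖x‖^{2j} = (2^m j! / (j-m)!) ‖x‖^{2j-2m} q(x). -/
open MeasureTheory MvPolynomial Finset Metric Topology Asymptotics Real

noncomputable section

namespace Aux

variable {d : ℕ}

/-- partial derivatives commute -/
theorem sub_single_apply_ne {s : Fin d →₀ ℕ} {i j : Fin d} (h : i ≠ j) :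
    ((s - Finsupp.single i 1 : Fin d →₀ ℕ)) j = s j := by
  simp [Finsupp.tsub_apply, Finsupp.single_apply, h]

theorem sub_single_apply_self (s : Fin d →₀ ℕ) (i : Fin d) :
    ((s - Finsupp.single i 1 : Fin d →₀ ℕ)) i = s i - 1 := by
  simp [Finsupp.tsub_apply, Finsupp.single_apply]

theorem add_single_apply_self (s : Fin d →₀ ℕ) (i : Fin d) :
    ((s + Finsupp.single i 1 : Fin d →₀ ℕ)) i = s i + 1 := by
  simp [Finsupp.add_apply, Finsupp.single_apply]

theorem add_single_apply_ne {s : Fin d →₀ ℕ} {i j : Fin d} (h : i ≠ j) :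
    ((s + Finsupp.single i 1 : Fin d →₀ ℕ)) j = s j := by
  simp [Finsupp.add_apply, Finsupp.single_apply, h]

/-- partial derivatives commute -/
theorem pderiv_comm (i j : Fin d) (p : MvPolynomial (Fin d) ℝ) :
    pderiv i (pderiv j p) = pderiv j (pderiv i p) := by
  induction p using MvPolynomial.induction_on' with
  | monomial s c =>
      simp only [pderiv_monomial]
      rcases eq_or_ne i j with rfl | hij
      · rfl
      · have hidx : s - Finsupp.single j 1 - Finsupp.single i 1
            = s - Finsupp.single i 1 - Finsupp.single j 1 := by
          ext k
          simp only [Finsupp.tsub_apply, Finsupp.single_apply]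
          omega
      
        rw [hidx, sub_single_apply_ne (Ne.symm hij), sub_single_apply_ne hij,
          mul_right_comm]
  | add p q hp hq => simp [map_add, hp, hq]

def mpdL (l : List (Fin d)) (s : Fin d →₀ ℕ) (p : MvPolynomial (Fin d) ℝ) :
    MvPolynomial (Fin d) ℝ :=
  ((l.map (fun j => (fun q : MvPolynomial (Fin d) ℝ => pderiv j q)^[s j])).foldr
    (fun g h => g ∘ h) id) p

theorem mpderiv_eq_mpdL (s : Fin d →₀ ℕ) (p : MvPolynomial (Fin d) ℝ) :
    mpderiv s p = mpdL (List.finRange d) s p := rfl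

@[simp] theorem mpdL_nil (s : Fin d →₀ ℕ) (p) : mpdL ([] : List (Fin d)) s p = p := rfl

theorem mpdL_cons (a : Fin d) (l : List (Fin d)) (s : Fin d →₀ ℕ) (p) :
    mpdL (a :: l) s p = (fun q : MvPolynomial (Fin d) ℝ => pderiv a q)^[s a] (mpdL l s p) := rfl

theorem pderiv_iterate_comm (i j : Fin d) (n : ℕ) (p : MvPolynomial (Fin d) ℝ) :
    pderiv i ((fun q : MvPolynomial (Fin d) ℝ => pderiv j q)^[n] p)
      = (fun q : MvPolynomial (Fin d) ℝ => pderiv j q)^[n] (pderiv i p) := by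
  induction n generalizing p with
  | zero => rfl
  | succ n ih =>
      rw [Function.iterate_succ_apply, Function.iterate_succ_apply, ih, pderiv_comm]

theorem pderiv_mpdL (i : Fin d) (l : List (Fin d)) (s : Fin d →₀ ℕ) (p) :
    pderiv i (mpdL l s p) = mpdL l s (pderiv i p) := by
  induction l generalizing p with
  | nil => rfl
  | cons a l ih => rw [mpdL_cons, mpdL_cons, pderiv_iterate_comm, ih]

theorem mpdL_congr {l : List (Fin d)} {s t : Fin d →₀ ℕ} (h : ∀ j ∈ l, s j = t j) (p) :
    mpdL l s p = mpdL l t p := by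
  induction l with
  | nil => rfl
  | cons a l ih =>
      rw [mpdL_cons, mpdL_cons, h a List.mem_cons_self, ih fun j hj => h j (List.mem_cons_of_mem a hj)]

theorem mpdL_add_single {l : List (Fin d)} (hl : l.Nodup) {i : Fin d} (hi : i ∈ l)
    (s : Fin d →₀ ℕ) (p) :
    mpdL l (s + Finsupp.single i 1) p = pderiv i (mpdL l s p) := by
  induction l with
  | nil => cases hi
  | cons a l ih =>
      rcases List.mem_cons.mp hi with rfl | hi'
      · have hnotin : i ∉ l := (List.nodup_cons.mp hl).1
        have hcongr : mpdL l (s + Finsupp.single i 1) p = mpdL l s p := by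
          refine mpdL_congr (fun j hj => ?_) p
          exact add_single_apply_ne fun h => hnotin (by rw [h]; exact hj)
        rw [mpdL_cons, mpdL_cons, hcongr]
        rw [add_single_apply_self, Function.iterate_succ_apply']
      · have ha : a ≠ i := by
          rintro rfl; exact (List.nodup_cons.mp hl).1 hi'
        rw [mpdL_cons, mpdL_cons, ih (List.nodup_cons.mp hl).2 hi']
        rw [add_single_apply_ne (Ne.symm ha)]
        generalize mpdL l s p = Q
        induction (s a) generalizing Q with
        | zero => rfl
        | succ n ihn =>
            rw [Function.iterate_succ_apply, Function.iterate_succ_apply, pderiv_comm, ihn]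

theorem mpderiv_add_single (i : Fin d) (s : Fin d →₀ ℕ) (p) :
    mpderiv (s + Finsupp.single i 1) p = pderiv i (mpderiv s p) := by
  rw [mpderiv_eq_mpdL, mpderiv_eq_mpdL]
  exact mpdL_add_single (List.nodup_finRange d) (List.mem_finRange i) s p

theorem mpderiv_add_single' (i : Fin d) (s : Fin d →₀ ℕ) (p) :
    mpderiv (s + Finsupp.single i 1) p = mpderiv s (pderiv i p) := by
  rw [mpderiv_add_single, mpderiv_eq_mpdL, mpderiv_eq_mpdL, pderiv_mpdL]

theorem mpdL_add (l : List (Fin d)) (s : Fin d →₀ ℕ) (p q) :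
    mpdL l s (p + q) = mpdL l s p + mpdL l s q := by
  induction l generalizing p q with
  | nil => rfl
  | cons a l ih =>
      rw [mpdL_cons, mpdL_cons, mpdL_cons, ih]
      generalize mpdL l s p = P; generalize mpdL l s q = Q
      induction (s a) generalizing P Q with
      | zero => rfl
      | succ n ihn =>
          rw [Function.iterate_succ_apply, Function.iterate_succ_apply,
            Function.iterate_succ_apply, map_add, ihn]

theorem mpdL_smul (l : List (Fin d)) (s : Fin d →₀ ℕ) (c : ℝ) (p) :
    mpdL l s (c • p) = c • mpdL l s p := by
  induction l generalizing p with
  | nil => rfl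
  | cons a l ih =>
      rw [mpdL_cons, mpdL_cons, ih]
      generalize mpdL l s p = P
      induction (s a) generalizing P with
      | zero => rfl
      | succ n ihn =>
          rw [Function.iterate_succ_apply, Function.iterate_succ_apply, Derivation.map_smul, ihn]

theorem mpderiv_add (s : Fin d →₀ ℕ) (p q) :
    mpderiv s (p + q) = mpderiv s p + mpderiv s q := mpdL_add _ s p q

theorem mpderiv_smul (s : Fin d →₀ ℕ) (c : ℝ) (p) :
    mpderiv s (c • p) = c • mpderiv s p := mpdL_smul _ s c p

theorem mpderiv_zero (s : Fin d →₀ ℕ) : mpderiv s (0 : MvPolynomial (Fin d) ℝ) = 0 := by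
  have := mpderiv_smul s 0 (0 : MvPolynomial (Fin d) ℝ)
  simpa using this

theorem mpderiv_zero_index (p : MvPolynomial (Fin d) ℝ) : mpderiv 0 p = p := by
  rw [mpderiv_eq_mpdL]
  induction (List.finRange d) with
  | nil => rfl
  | cons a l ih => rw [mpdL_cons, ih]; rfl


theorem sum_add_single (t : Fin d →₀ ℕ) (a : Fin d) :
    (∑ j, ((t + Finsupp.single a 1 : Fin d →₀ ℕ)) j) = (∑ j, t j) + 1 := by
  have h : ∀ j, ((t + Finsupp.single a 1 : Fin d →₀ ℕ)) j
      = t j + (if a = j then 1 else 0) := by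
    intro j
    simp [Finsupp.add_apply, Finsupp.single_apply]
  rw [Finset.sum_congr rfl fun j _ => h j, Finset.sum_add_distrib,
    Finset.sum_ite_eq Finset.univ a (fun _ => 1)]
  simp

theorem mpderiv_X_mul (s : Fin d →₀ ℕ) (i : Fin d) (p : MvPolynomial (Fin d) ℝ) :
    mpderiv s (X i * p)
      = X i * mpderiv s p + ((s i : ℝ)) • mpderiv (s - Finsupp.single i 1) p := by
  suffices H : ∀ n : ℕ, ∀ s : Fin d →₀ ℕ, (∑ j, s j) = n → ∀ p : MvPolynomial (Fin d) ℝ,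
      mpderiv s (X i * p)
        = X i * mpderiv s p + ((s i : ℝ)) • mpderiv (s - Finsupp.single i 1) p from
    H _ s rfl p
  intro n
  induction n with
  | zero =>
      intro s hs p
      have hs0 : s = 0 := by
        ext j
        exact Finset.sum_eq_zero_iff.mp hs j (Finset.mem_univ j)
      subst hs0
      simp [mpderiv_zero_index]
  | succ n ih =>
      intro s hs p
      obtain ⟨a, ha⟩ : ∃ a, s a ≠ 0 := by
        by_contra h
        push_neg at h
        simp [h] at hs
      obtain ⟨t, rfl⟩ : ∃ t : Fin d →₀ ℕ, s = t + Finsupp.single a 1 := by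
        refine ⟨s - Finsupp.single a 1, ?_⟩
        ext j
        by_cases h : a = j
        · subst h; rw [add_single_apply_self, sub_single_apply_self]; omega
        · rw [add_single_apply_ne h, sub_single_apply_ne h]
      have htn : (∑ j, t j) = n := by
        have h2 := sum_add_single t a
        omega
      have expand : mpderiv (t + Finsupp.single a 1) (X i * p)
          = pderiv a (X i) * mpderiv t p + X i * pderiv a (mpderiv t p)
            + (t i : ℝ) • pderiv a (mpderiv (t - Finsupp.single i 1) p) := by
        rw [mpderiv_add_single, ih t htn, map_add, pderiv_mul, Derivation.map_smul]
      rw [expand, ← mpderiv_add_single, ← mpderiv_add_single]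
      rcases eq_or_ne a i with rfl | hai
      · rw [pderiv_X_self, one_mul, add_single_apply_self]
        have hsub : (t + Finsupp.single a 1 - Finsupp.single a 1 : Fin d →₀ ℕ) = t := by
          ext j
          simp only [Finsupp.tsub_apply, Finsupp.add_apply, Finsupp.single_apply]
          split_ifs <;> omega
        rw [hsub]
        rcases Nat.eq_zero_or_pos (t a) with h0 | hpos
        · have hsub2 : (t - Finsupp.single a 1 : Fin d →₀ ℕ) = t := by
            ext j
            rcases eq_or_ne a j with rfl | h
            · rw [sub_single_apply_self]; omega
            · rw [sub_single_apply_ne h]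
          rw [h0, hsub2]
          push_cast
          module
        · have hsub3 : (t - Finsupp.single a 1 + Finsupp.single a 1 : Fin d →₀ ℕ) = t := by
            ext j
            rcases eq_or_ne a j with rfl | h
            · rw [add_single_apply_self, sub_single_apply_self]; omega
            · rw [add_single_apply_ne h, sub_single_apply_ne h]
          rw [hsub3]
          push_cast
          module
      · rw [pderiv_X_of_ne (Ne.symm hai), zero_mul, add_single_apply_ne hai]
        have hsub4 : (t + Finsupp.single a 1 - Finsupp.single i 1 : Fin d →₀ ℕ)
            = t - Finsupp.single i 1 + Finsupp.single a 1 := by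
          ext j
          simp only [Finsupp.tsub_apply, Finsupp.add_apply, Finsupp.single_apply]
          split_ifs <;> omega
        rw [hsub4, zero_add]

theorem sub_add_single_cancel {s : Fin d →₀ ℕ} {a : Fin d} (ha : s a ≠ 0) :
    s - Finsupp.single a 1 + Finsupp.single a 1 = s := by
  ext j
  rcases eq_or_ne a j with rfl | h
  · rw [add_single_apply_self, sub_single_apply_self]; omega
  · rw [add_single_apply_ne h, sub_single_apply_ne h]

theorem dop_monomial (s : Fin d →₀ ℕ) (c : ℝ) (p : MvPolynomial (Fin d) ℝ) :
    dop (monomial s c) p = c • mpderiv s p :=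
  sum_monomial_eq (by simp)

theorem dop_add_left (q1 q2 p : MvPolynomial (Fin d) ℝ) :
    dop (q1 + q2) p = dop q1 p + dop q2 p :=
  Finsupp.sum_add_index' (fun s => by simp) (fun s b1 b2 => add_smul _ _ _)

theorem dop_zero_left (p : MvPolynomial (Fin d) ℝ) : dop 0 p = 0 :=
  Finsupp.sum_zero_index

theorem dop_sum_left {ι : Type*} (t : Finset ι) (r : ι → MvPolynomial (Fin d) ℝ)
    (p : MvPolynomial (Fin d) ℝ) :
    dop (∑ i ∈ t, r i) p = ∑ i ∈ t, dop (r i) p := by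
  classical
  induction t using Finset.induction_on with
  | empty => simp [dop_zero_left]
  | insert _ _ hnot ih =>
      rw [Finset.sum_insert hnot, Finset.sum_insert hnot, dop_add_left, ih]

theorem dop_add_right (q p1 p2 : MvPolynomial (Fin d) ℝ) :
    dop q (p1 + p2) = dop q p1 + dop q p2 := by
  simp only [dop, Finsupp.sum, mpderiv_add, smul_add]
  rw [← Finset.sum_add_distrib]

theorem dop_smul_right (q : MvPolynomial (Fin d) ℝ) (c : ℝ) (p : MvPolynomial (Fin d) ℝ) :
    dop q (c • p) = c • dop q p := by
  simp only [dop, Finsupp.sum, mpderiv_smul]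
  rw [Finset.smul_sum]
  exact Finset.sum_congr rfl fun s _ => smul_comm _ _ _

theorem dop_zero_right (q : MvPolynomial (Fin d) ℝ) : dop q 0 = 0 := by
  simp [dop, Finsupp.sum, mpderiv_zero]

theorem dop_sum_right {ι : Type*} (q : MvPolynomial (Fin d) ℝ) (t : Finset ι)
    (p : ι → MvPolynomial (Fin d) ℝ) :
    dop q (∑ i ∈ t, p i) = ∑ i ∈ t, dop q (p i) := by
  classical
  induction t using Finset.induction_on with
  | empty => simp [dop_zero_right]
  | insert _ _ hnot ih =>
      rw [Finset.sum_insert hnot, Finset.sum_insert hnot, dop_add_right, ih]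

theorem dop_X_mul (q : MvPolynomial (Fin d) ℝ) (i : Fin d) (p : MvPolynomial (Fin d) ℝ) :
    dop q (X i * p) = X i * dop q p + dop (pderiv i q) p := by
  induction q using MvPolynomial.induction_on' with
  | monomial s c =>
      simp only [pderiv_monomial, dop_monomial]
      rw [mpderiv_X_mul, smul_add, mul_smul_comm, smul_smul]
  | add q1 q2 h1 h2 =>
      simp only [map_add, dop_add_left, h1, h2, mul_add]
      abel

theorem lap_pderiv (i : Fin d) (q : MvPolynomial (Fin d) ℝ) :
    lap (pderiv i q) = pderiv i (lap q) := by
  unfold lap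
  rw [map_sum]
  refine Finset.sum_congr rfl fun j _ => ?_
  rw [show pderiv j (pderiv i q) = pderiv i (pderiv j q) from pderiv_comm j i q,
    pderiv_comm j i]

theorem dop_nsq_mul (q p : MvPolynomial (Fin d) ℝ) :
    dop q (nsq d * p) = nsq d * dop q p
      + (2:ℝ) • (∑ i : Fin d, X i * dop (pderiv i q) p) + dop (lap q) p := by
  have h1 : ∀ p' : MvPolynomial (Fin d) ℝ, nsq d * p' = ∑ i : Fin d, X i * (X i * p') := by
    intro p'
    rw [nsq, Finset.sum_mul]
    exact Finset.sum_congr rfl fun i _ => by rw [pow_two, mul_assoc]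
  rw [h1, dop_sum_right]
  have h2 : ∀ i : Fin d, dop q (X i * (X i * p))
      = X i * (X i * dop q p) + X i * dop (pderiv i q) p
        + (X i * dop (pderiv i q) p + dop (pderiv i (pderiv i q)) p) := by
    intro i
    rw [dop_X_mul, dop_X_mul, dop_X_mul, mul_add]
  rw [Finset.sum_congr rfl fun i _ => h2 i, Finset.sum_add_distrib, Finset.sum_add_distrib,
    Finset.sum_add_distrib, ← h1, lap, dop_sum_left, two_smul]
  abel

theorem degree_eq_sum_univ (s : Fin d →₀ ℕ) : s.degree = ∑ i : Fin d, s i := by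
  rw [Finsupp.degree]
  exact Finset.sum_subset (Finset.subset_univ _)
    (fun i _ hi => Finsupp.notMem_support_iff.mp hi)

theorem sum_univ_eq_of_mem_support {q : MvPolynomial (Fin d) ℝ} {m : ℕ}
    (hq : q.IsHomogeneous m) {s : Fin d →₀ ℕ} (hs : s ∈ q.support) :
    (∑ i : Fin d, s i) = m := by
  rw [← degree_eq_sum_univ, Finsupp.degree_eq_weight_one]
  exact hq (mem_support_iff.mp hs)

theorem X_mul_monomial' (i : Fin d) (u : Fin d →₀ ℕ) (b : ℝ) :
    X i * monomial u b = monomial (u + Finsupp.single i 1) b := by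
  rw [X, monomial_mul, one_mul, add_comm]

theorem euler_monomial (s : Fin d →₀ ℕ) (c : ℝ) :
    ∑ i : Fin d, X i * pderiv i (monomial s c)
      = (((∑ i : Fin d, s i : ℕ)) : ℝ) • monomial s c := by
  have key : ∀ i : Fin d, X i * pderiv i (monomial s c)
      = ((s i : ℕ) : ℝ) • monomial s c := by
    intro i
    rw [pderiv_monomial]
    rcases Nat.eq_zero_or_pos (s i) with h0 | hpos
    · simp [h0]
    · rw [X_mul_monomial', sub_add_single_cancel (by omega), smul_monomial, smul_eq_mul, mul_comm]
  rw [Finset.sum_congr rfl fun i _ => key i, ← Finset.sum_smul, ← Nat.cast_sum]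

theorem euler {q : MvPolynomial (Fin d) ℝ} {m : ℕ} (hq : q.IsHomogeneous m) :
    ∑ i : Fin d, X i * pderiv i q = (m : ℝ) • q := by
  conv_lhs =>
    rw [show q = ∑ s ∈ q.support, monomial s (coeff s q) from
      (support_sum_monomial_coeff q).symm]
  have step : ∀ i : Fin d, X i * pderiv i (∑ s ∈ q.support, monomial s (coeff s q))
      = ∑ s ∈ q.support, X i * pderiv i (monomial s (coeff s q)) := by
    intro i
    rw [map_sum, Finset.mul_sum]
  rw [Finset.sum_congr rfl fun i _ => step i, Finset.sum_comm]
  have : ∀ s ∈ q.support, ∑ i : Fin d, X i * pderiv i (monomial s (coeff s q))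
      = (m : ℝ) • monomial s (coeff s q) := by
    intro s hs
    rw [euler_monomial, sum_univ_eq_of_mem_support hq hs]
  rw [Finset.sum_congr rfl this, ← Finset.smul_sum, support_sum_monomial_coeff]

theorem isHomogeneous_pderiv {q : MvPolynomial (Fin d) ℝ} {m : ℕ}
    (hq : q.IsHomogeneous (m + 1)) (i : Fin d) : (pderiv i q).IsHomogeneous m := by
  rw [show q = ∑ s ∈ q.support, monomial s (coeff s q) from
    (support_sum_monomial_coeff q).symm, map_sum]
  refine IsHomogeneous.sum _ _ _ fun s hs => ?_
  rw [pderiv_monomial]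
  rcases Nat.eq_zero_or_pos (s i) with h0 | hpos
  · rw [h0]
    norm_num
    exact isHomogeneous_zero _ _ _
  · refine isHomogeneous_monomial _ ?_
    rw [degree_eq_sum_univ]
    have h1 : ∀ j : Fin d, ((s - Finsupp.single i 1 : Fin d →₀ ℕ)) j
        = s j - (if i = j then 1 else 0) := by
      intro j
      rcases eq_or_ne i j with rfl | h
      · rw [sub_single_apply_self]; simp
      · rw [sub_single_apply_ne h]; simp [h]
    rw [Finset.sum_congr rfl fun j _ => h1 j]
    have h2 := sum_univ_eq_of_mem_support hq hs
    have h3 : ∑ j : Fin d, (s j - if i = j then 1 else 0)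
        = (∑ j : Fin d, s j) - 1 := by
      have h4 : ∑ j : Fin d, (if i = j then 1 else 0) = 1 := by
        rw [Finset.sum_ite_eq Finset.univ i (fun _ => 1)]
        simp
      have h5 : ∀ j : Fin d, (if i = j then 1 else 0) ≤ s j := by
        intro j
        rcases eq_or_ne i j with rfl | h
        · simp; omega
        · simp [h]
      have h6 := Finset.sum_tsub_distrib (f := fun j => s j)
        (g := fun j => if i = j then 1 else 0) Finset.univ (fun j _ => h5 j)
      rw [h6, h4]
    omega

theorem mpderiv_one {s : Fin d →₀ ℕ} (hs : s ≠ 0) :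
    mpderiv s (1 : MvPolynomial (Fin d) ℝ) = 0 := by
  obtain ⟨a, ha⟩ := Finsupp.ne_iff.mp hs
  rw [Finsupp.zero_apply] at ha
  rw [← sub_add_single_cancel ha, mpderiv_add_single', pderiv_one, mpderiv_zero]

theorem dop_one {q : MvPolynomial (Fin d) ℝ} {m : ℕ} (hq : q.IsHomogeneous m)
    (hm : 0 < m) : dop q (1 : MvPolynomial (Fin d) ℝ) = 0 := by
  rw [dop, Finsupp.sum]
  refine Finset.sum_eq_zero fun s hs => ?_
  have hsne : s ≠ 0 := by
    intro h
    have := sum_univ_eq_of_mem_support hq hs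
    rw [h] at this
    simp at this
    omega
  rw [mpderiv_one hsne, smul_zero]

theorem eq_C_of_isHomogeneous_zero {q : MvPolynomial (Fin d) ℝ}
    (hq : q.IsHomogeneous 0) : q = C (coeff 0 q) := by
  ext s
  rcases eq_or_ne s 0 with rfl | hs
  · simp
  · rw [coeff_C, if_neg (Ne.symm hs)]
    refine hq.coeff_eq_zero ?_
    intro h
    exact hs ((Finsupp.degree_eq_zero_iff s).mp h)

theorem dop_C (c : ℝ) (p : MvPolynomial (Fin d) ℝ) : dop (C c) p = c • p := by
  rw [show (C c : MvPolynomial (Fin d) ℝ) = monomial 0 c from rfl, dop_monomial,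
    mpderiv_zero_index]

theorem dop_nsq_pow (d : ℕ) (m : ℕ) :
    ∀ q : MvPolynomial (Fin d) ℝ, q.IsHomogeneous m → lap q = 0 →
    ∀ j : ℕ, dop q (nsq d ^ j)
      = ((2:ℝ) ^ m * (j.descFactorial m : ℝ)) • (nsq d ^ (j - m) * q) := by
  induction m with
  | zero =>
      intro q hq _ j
      rw [eq_C_of_isHomogeneous_zero hq, dop_C, Nat.descFactorial_zero, Nat.sub_zero,
        Nat.cast_one, pow_zero, one_mul, one_smul, smul_eq_C_mul]
      ring
  | succ m ihm =>
      intro q hq hlap j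
      induction j with
      | zero =>
          rw [pow_zero, dop_one hq (Nat.succ_pos m), Nat.zero_descFactorial_succ]
          simp
      | succ j ihj =>
          have hpow : nsq d ^ (j + 1) = nsq d * nsq d ^ j := by ring
          rw [hpow, dop_nsq_mul, hlap, dop_zero_left, add_zero, ihj]
          have hpd : ∀ i : Fin d, dop (pderiv i q) (nsq d ^ j)
              = ((2:ℝ) ^ m * ((j.descFactorial m : ℕ) : ℝ)) • (nsq d ^ (j - m) * pderiv i q) :=
            fun i => ihm (pderiv i q) (isHomogeneous_pderiv hq i)
              (by rw [lap_pderiv, hlap, map_zero]) j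
          rw [Finset.sum_congr rfl fun i _ => by rw [hpd i]]
          have hsum : ∑ i : Fin d, X i * (((2:ℝ) ^ m * ((j.descFactorial m : ℕ) : ℝ))
                • (nsq d ^ (j - m) * pderiv i q))
              = ((2:ℝ) ^ m * ((j.descFactorial m : ℕ) : ℝ) * (m + 1))
                • (nsq d ^ (j - m) * q) := by
            have e1 : ∀ i : Fin d, X i * (((2:ℝ) ^ m * ((j.descFactorial m : ℕ) : ℝ))
                  • (nsq d ^ (j - m) * pderiv i q))
                = ((2:ℝ) ^ m * ((j.descFactorial m : ℕ) : ℝ))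
                  • (nsq d ^ (j - m) * (X i * pderiv i q)) := by
              intro i
              rw [mul_smul_comm]
              congr 1
              ring
            rw [Finset.sum_congr rfl fun i _ => e1 i, ← Finset.smul_sum, ← Finset.mul_sum,
              euler hq]
            rw [mul_smul_comm, smul_smul]
            congr 1
            push_cast
            ring
          rw [hsum, mul_smul_comm, smul_smul, Nat.succ_sub_succ]
          have hpow2 : nsq d * (nsq d ^ (j - (m + 1)) * q)
              = nsq d ^ (j - (m + 1) + 1) * q := by ring
          rw [hpow2]
          rcases le_or_gt (m + 1) j with hle | hlt
          · have hexp : j - (m + 1) + 1 = j - m := by omega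
            rw [hexp, ← add_smul]
            congr 1
            rw [Nat.succ_descFactorial_succ, Nat.descFactorial_succ]
            have hc : ((j - m : ℕ) : ℝ) = (j : ℝ) - (m : ℝ) := by
              push_cast [Nat.cast_sub (by omega : m ≤ j)]
              ring
            push_cast [hc]
            ring
          · have h0 : j.descFactorial (m + 1) = 0 :=
              Nat.descFactorial_eq_zero_iff_lt.mpr hlt
            rw [h0, Nat.cast_zero, mul_zero, zero_smul, zero_add,
              Nat.succ_descFactorial_succ]
            rcases lt_or_eq_of_le (Nat.lt_succ_iff.mp hlt) with hjm | hjm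
            · rw [Nat.descFactorial_eq_zero_iff_lt.mpr hjm]
              norm_num
            · subst hjm
              congr 1
              push_cast
              ring

theorem cast_descFactorial {j m : ℕ} (h : m ≤ j) :
    ((j.descFactorial m : ℕ) : ℝ) = (j.factorial : ℝ) / ((j - m).factorial : ℝ) := by
  rw [eq_div_iff (by exact_mod_cast Nat.factorial_ne_zero (j - m) :
    ((j - m).factorial : ℝ) ≠ 0), ← Nat.cast_mul]
  norm_cast
  rw [mul_comm]
  exact Nat.factorial_mul_descFactorial h

end Aux

namespace AuxB

variable {d : ℕ}

theorem hasFDerivAt_evalE (p : MvPolynomial (Fin d) ℝ) (x : Ed d) :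
    HasFDerivAt (fun y : Ed d => evalE p y)
      (∑ i : Fin d, evalE (pderiv i p) x • (EuclideanSpace.proj i : Ed d →L[ℝ] ℝ)) x := by
  induction p using MvPolynomial.induction_on with
  | C a =>
      have h1 : (fun y : Ed d => evalE (C a) y) = fun _ => a := by
        funext y; simp [evalE]
      have h2 : (∑ i : Fin d, evalE (pderiv i (C a : MvPolynomial (Fin d) ℝ)) x
          • (EuclideanSpace.proj i : Ed d →L[ℝ] ℝ)) = 0 := by
        simp [pderiv_C, evalE]
      rw [h1, h2]
      exact hasFDerivAt_const a x
  | add p q hp hq =>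
      have h1 : (fun y : Ed d => evalE (p + q) y)
          = fun y => evalE p y + evalE q y := by
        funext y; simp [evalE]
      have h2 : (∑ i : Fin d, evalE (pderiv i (p + q)) x
            • (EuclideanSpace.proj i : Ed d →L[ℝ] ℝ))
          = (∑ i : Fin d, evalE (pderiv i p) x • (EuclideanSpace.proj i : Ed d →L[ℝ] ℝ))
            + ∑ i : Fin d, evalE (pderiv i q) x • (EuclideanSpace.proj i : Ed d →L[ℝ] ℝ) := by
        rw [← Finset.sum_add_distrib]
        refine Finset.sum_congr rfl fun i _ => ?_
        rw [map_add]
        have : evalE (pderiv i p + pderiv i q) x = evalE (pderiv i p) x + evalE (pderiv i q) x := by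
          simp [evalE]
        rw [this, add_smul]
      rw [h1, h2]
      exact hp.add hq
  | mul_X p i hp =>
      have hXi : HasFDerivAt (fun y : Ed d => y i)
          (EuclideanSpace.proj i : Ed d →L[ℝ] ℝ) x :=
        (EuclideanSpace.proj (𝕜 := ℝ) i).hasFDerivAt
      have h1 : (fun y : Ed d => evalE (p * X i) y)
          = fun y => evalE p y * y i := by
        funext y; simp [evalE]
      have hck : ∀ k : Fin d, evalE (pderiv k (p * X i)) x
          = evalE (pderiv k p) x * x i + (if i = k then evalE p x else 0) := by
        intro k
        rw [pderiv_mul]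
        rcases eq_or_ne i k with rfl | h
        · rw [pderiv_X_self, if_pos rfl]
          simp [evalE]
        · rw [pderiv_X_of_ne h, if_neg h]
          simp [evalE]
      have hclm : (∑ k : Fin d, evalE (pderiv k (p * X i)) x
            • (EuclideanSpace.proj k : Ed d →L[ℝ] ℝ))
          = evalE p x • (EuclideanSpace.proj i : Ed d →L[ℝ] ℝ)
            + x i • ∑ k : Fin d, evalE (pderiv k p) x
              • (EuclideanSpace.proj k : Ed d →L[ℝ] ℝ) := by
        rw [Finset.sum_congr rfl fun k _ => by rw [hck k]]
        simp only [add_smul]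
        rw [Finset.sum_add_distrib, add_comm]
        congr 1
        · calc ∑ k : Fin d, (if i = k then evalE p x else 0)
                  • (EuclideanSpace.proj k : Ed d →L[ℝ] ℝ)
              = ∑ k : Fin d, (if i = k then evalE p x
                  • (EuclideanSpace.proj k : Ed d →L[ℝ] ℝ) else 0) :=
                Finset.sum_congr rfl fun k _ => by rw [ite_smul, zero_smul]
            _ = evalE p x • (EuclideanSpace.proj i : Ed d →L[ℝ] ℝ) := by
                rw [Finset.sum_ite_eq Finset.univ i
                  (fun k => evalE p x • (EuclideanSpace.proj k : Ed d →L[ℝ] ℝ))]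
                simp
        · rw [Finset.smul_sum]
          refine Finset.sum_congr rfl fun k _ => ?_
          rw [smul_smul, mul_comm]
      rw [h1, hclm]
      exact hp.mul hXi
      
theorem pdF_evalE (j : Fin d) (p : MvPolynomial (Fin d) ℝ) :
    pdF j (fun y : Ed d => evalE p y) = fun y => evalE (pderiv j p) y := by
  funext x
  rw [pdF, (hasFDerivAt_evalE p x).fderiv]
  rw [ContinuousLinearMap.sum_apply]
  have : ∀ k : Fin d, (evalE (pderiv k p) x • (EuclideanSpace.proj k : Ed d →L[ℝ] ℝ))
      (EuclideanSpace.single j 1)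
      = if j = k then evalE (pderiv j p) x else 0 := by
    intro k
    rw [ContinuousLinearMap.smul_apply]
    rcases eq_or_ne j k with rfl | h
    · simp [EuclideanSpace.single_apply]
    · simp [EuclideanSpace.single_apply, h, Ne.symm h]
  rw [Finset.sum_congr rfl fun k _ => this k,
    Finset.sum_ite_eq Finset.univ j (fun _ => evalE (pderiv j p) x)]
  simp

theorem iter_pdF_evalE (j : Fin d) (n : ℕ) (p : MvPolynomial (Fin d) ℝ) :
    (pdF j)^[n] (fun y : Ed d => evalE p y)
      = fun y => evalE ((fun q : MvPolynomial (Fin d) ℝ => pderiv j q)^[n] p) y := by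
  induction n generalizing p with
  | zero => rfl
  | succ n ih =>
      rw [Function.iterate_succ_apply, pdF_evalE, ih, Function.iterate_succ_apply]

theorem mpdF_evalE (s : Fin d →₀ ℕ) (p : MvPolynomial (Fin d) ℝ) :
    mpdF s (fun y : Ed d => evalE p y)
      = fun y => evalE
          (((List.finRange d).map
              (fun j => (fun q : MvPolynomial (Fin d) ℝ => pderiv j q)^[s j])).foldr
            (fun g h => g ∘ h) id p) y := by
  rw [mpdF]
  induction (List.finRange d) generalizing p with
  | nil => rfl
  | cons a l ih =>
      simp only [List.map_cons, List.foldr_cons, Function.comp_apply]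
      rw [ih p, iter_pdF_evalE]


theorem dopF_evalE (q p : MvPolynomial (Fin d) ℝ) (x : Ed d) :
    dopF q (fun y : Ed d => evalE p y) x = evalE (dop q p) x := by
  simp only [dopF, dop, Finsupp.sum]
  have hR : (∑ s ∈ q.support, evalE (coeff s q • mpderiv s p) x)
      = evalE (∑ s ∈ q.support, coeff s q • mpderiv s p) x := by
    rw [evalE, map_sum]
    rfl
  refine Eq.trans (Finset.sum_congr rfl fun s _ => ?_) hR
  rw [congrFun (mpdF_evalE s p) x]
  show coeff s q * evalE (mpderiv s p) x = evalE (coeff s q • mpderiv s p) x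
  simp only [evalE, smul_eq_C_mul, map_mul, eval_C]

theorem norm_pow_eq (x : Ed d) (j : ℕ) : ‖x‖ ^ (2 * j) = evalE (nsq d ^ j) x := by
  have h2 : ‖x‖ ^ 2 = ∑ i : Fin d, (x i) ^ 2 := by
    rw [EuclideanSpace.norm_eq, Real.sq_sqrt (by positivity)]
    exact Finset.sum_congr rfl fun i _ => by rw [Real.norm_eq_abs, sq_abs]
  have h1 : evalE (nsq d) x = ∑ i : Fin d, (x i) ^ 2 := by
    rw [evalE, nsq, map_sum]
    exact Finset.sum_congr rfl fun i _ => by rw [map_pow, eval_X]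
  rw [pow_mul, h2, ← h1, evalE, evalE, map_pow]

end AuxB

/-- `q(∇)` applied to `x ↦ ‖x‖^{2j}` for a harmonic homogeneous `q` of degree `m`. -/
theorem stmt6 (d m j : ℕ) (q : MvPolynomial (Fin d) ℝ)
    (hqhom : q.IsHomogeneous m) (hqharm : lap q = 0) :
    (j < m → ∀ x : Ed d, dopF q (fun x : Ed d => ‖x‖ ^ (2 * j)) x = 0) ∧
    (m ≤ j → ∀ x : Ed d, dopF q (fun x : Ed d => ‖x‖ ^ (2 * j)) x
      = (2 ^ m * (j.factorial : ℝ) / ((j - m).factorial : ℝ)) * ‖x‖ ^ (2 * j - 2 * m)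
          * evalE q x) := by
  have hfun : (fun x : Ed d => ‖x‖ ^ (2 * j)) = fun y => evalE (nsq d ^ j) y :=
    funext fun y => AuxB.norm_pow_eq y j
  constructor
  · intro hjm x
    rw [hfun, AuxB.dopF_evalE, Aux.dop_nsq_pow d m q hqhom hqharm j,
      Nat.descFactorial_eq_zero_iff_lt.mpr hjm, Nat.cast_zero, mul_zero, zero_smul]
    rw [evalE, map_zero]
  · intro hmj x
    rw [hfun, AuxB.dopF_evalE, Aux.dop_nsq_pow d m q hqhom hqharm j]
    have hsm : evalE (((2:ℝ) ^ m * ((j.descFactorial m : ℕ) : ℝ)) • (nsq d ^ (j - m) * q)) x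
        = ((2:ℝ) ^ m * ((j.descFactorial m : ℕ) : ℝ))
          * (evalE (nsq d ^ (j - m)) x * evalE q x) := by
      simp only [evalE, smul_eq_C_mul, map_mul, eval_C]
    rw [hsm, Aux.cast_descFactorial hmj,
      show 2 * j - 2 * m = 2 * (j - m) from by omega, AuxB.norm_pow_eq x (j - m)]
    ring
end
end

section
/- Let λ > 0. With the Rodrigues definition C_m^λ(t) = ((-1)^m (2λ)_m / (2^m m! (λ+1/2)_m)) (1-t²)^{1/2-λ} (d/dt)^m (1-t²)^{λ+m-1/2}, the Gegenbauer polynomials satisfy the orthogonality relation (m! / ((2λ)_m B(λ+1/2, 1/2))) ∫_{-1}^{1} C_n^λ(t) C_m^λ(t) (1-t²)^{λ-1/2} dt = δ_{mn} · λ/(n+λ). -/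
open MeasureTheory MvPolynomial Finset Metric Topology Asymptotics Real

noncomputable section

/-- The Beta function `B(a,b) = Γ(a)Γ(b)/Γ(a+b)`. -/
def betaR (a b : ℝ) : ℝ := Real.Gamma a * Real.Gamma b / Real.Gamma (a + b)

/-- The Gegenbauer polynomial `C_m^λ` defined by the Rodrigues-type formula. -/
def geg (lam : ℝ) (m : ℕ) (t : ℝ) : ℝ :=
  ((-1) ^ m * poch (2 * lam) m / (2 ^ m * (m.factorial : ℝ) * poch (lam + 1 / 2) m))
    * (1 - t ^ 2) ^ ((1 : ℝ) / 2 - lam)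
    * iteratedDeriv m (fun s : ℝ => (1 - s ^ 2) ^ (lam + (m : ℝ) - 1 / 2)) t

/-- The Funk–Hecke coefficient `a_m(φ)`. -/
def aCoef (lam : ℝ) (m : ℕ) (φ : ℝ → ℝ) : ℝ :=
  ((m.factorial : ℝ) / (poch (2 * lam) m * betaR (lam + 1 / 2) (1 / 2)))
    * ∫ t in (-1 : ℝ)..1, φ t * geg lam m t * (1 - t ^ 2) ^ (lam - 1 / 2)

namespace S12


lemma poch_succ (a : ℝ) (k : ℕ) : poch a (k+1) = poch a k * (a + k) :=
  Finset.prod_range_succ _ _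

lemma poch_pos {a : ℝ} (ha : 0 < a) (k : ℕ) : 0 < poch a k :=
  Finset.prod_pos fun i _ => by positivity

lemma poch_shift (a : ℝ) (n : ℕ) : poch a n * (a + n) = a * poch (a+1) n := by
  rw [← poch_succ]
  rw [poch, Finset.prod_range_succ']
  simp only [Nat.cast_zero, add_zero, Nat.cast_add, Nat.cast_one]
  rw [mul_comm, poch]
  congr 1
  exact Finset.prod_congr rfl fun i _ => by push_cast; ring

lemma poch_add (a : ℝ) (p q : ℕ) : poch a (p + q) = poch a p * poch (a + p) q := by
  rw [poch, Finset.prod_range_add]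
  congr 1
  exact Finset.prod_congr rfl fun i _ => by push_cast; ring

lemma poch_double (a : ℝ) (n : ℕ) :
    poch (2*a) (2*n) = 4^n * poch a n * poch (a + 1/2) n := by
  induction n with
  | zero => simp [poch]
  | succ n ih =>
    have h2 : 2 * (n + 1) = (2 * n + 1) + 1 := by ring
    rw [h2, poch_succ, poch_succ, ih, poch_succ, poch_succ]
    push_cast
    ring

lemma Gamma_poch {a : ℝ} (ha : 0 < a) (n : ℕ) :
    Real.Gamma (a + n) = poch a n * Real.Gamma a := by
  induction n with
  | zero => simp [poch]
  | succ n ih =>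
    have h : a + ((n:ℝ) + 1) = (a + n) + 1 := by ring
    push_cast
    rw [h, Real.Gamma_add_one (by positivity), ih, poch_succ]
    ring

/-- The Rodrigues polynomial. -/
def rodP (α : ℝ) : ℕ → Polynomial ℝ
  | 0 => 1
  | (k+1) => Polynomial.C (-2*(α - k)) * Polynomial.X * rodP α k
      + (1 - Polynomial.X ^ 2) * Polynomial.derivative (rodP α k)

lemma rodP_natDegree (α : ℝ) : ∀ k, (rodP α k).natDegree ≤ k := by
  intro k
  induction k with
  | zero => simp [rodP]
  | succ k ih =>
    rw [rodP]
    refine (Polynomial.natDegree_add_le _ _).trans (max_le ?_ ?_)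
    · refine Polynomial.natDegree_mul_le.trans ?_
      have h1 : (Polynomial.C (-2*(α - (k:ℝ))) * Polynomial.X).natDegree ≤ 1 :=
        (Polynomial.natDegree_C_mul_le _ _).trans Polynomial.natDegree_X_le
      omega
    · rcases Nat.eq_zero_or_pos k with rfl | hk
      · simp [rodP]
      · refine Polynomial.natDegree_mul_le.trans ?_
        have h1 : (1 - Polynomial.X ^ 2 : Polynomial ℝ).natDegree ≤ 2 := by
          refine (Polynomial.natDegree_sub_le _ _).trans ?_
          simp [Polynomial.natDegree_X_pow]
        have h2 : (Polynomial.derivative (rodP α k)).natDegree ≤ k - 1 :=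
          (Polynomial.natDegree_derivative_le _).trans (by omega)
        omega

lemma rodP_coeff (α : ℝ) : ∀ k, (rodP α k).coeff k = ∏ i ∈ Finset.range k, (-(2*α - i)) := by
  intro k
  induction k with
  | zero => simp [rodP]
  | succ k ih =>
    rw [rodP, Polynomial.coeff_add]
    have hA : (Polynomial.C (-2*(α - (k:ℝ))) * Polynomial.X * rodP α k).coeff (k+1)
        = (-2*(α - k)) * (rodP α k).coeff k := by
      rw [mul_assoc, Polynomial.coeff_C_mul, Polynomial.coeff_X_mul]
    have hB : ((1 - Polynomial.X ^ 2) * Polynomial.derivative (rodP α k)).coeff (k+1)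
        = -((k:ℝ) * (rodP α k).coeff k) := by
      rw [sub_mul, one_mul, Polynomial.coeff_sub]
      have hd1 : (Polynomial.derivative (rodP α k)).coeff (k+1) = 0 := by
        apply Polynomial.coeff_eq_zero_of_natDegree_lt
        exact lt_of_le_of_lt ((Polynomial.natDegree_derivative_le _).trans
          (Nat.sub_le_sub_right (rodP_natDegree α k) 1)) (by omega)
      rcases Nat.eq_zero_or_pos k with rfl | hk
      · simp [rodP]
      · obtain ⟨j, rfl⟩ : ∃ j, k = j + 1 := ⟨k - 1, by omega⟩
        have hx : (Polynomial.X ^ 2 * Polynomial.derivative (rodP α (j+1))).coeff (j + 1 + 1)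
            = (Polynomial.derivative (rodP α (j+1))).coeff j := by
          have := Polynomial.coeff_X_pow_mul (Polynomial.derivative (rodP α (j+1))) 2 j
          simpa [show j + 2 = j + 1 + 1 by omega] using this
        rw [hd1, hx, Polynomial.coeff_derivative]
        push_cast
        ring
    rw [hA, hB, ih, Finset.prod_range_succ]
    ring



lemma aux_hasDerivAt (α : ℝ) (k : ℕ) {t : ℝ} (h0 : 0 < 1 - t^2) :
    HasDerivAt (fun s : ℝ => (1 - s^2) ^ (α - k) * (rodP α k).eval s)
      ((1 - t^2) ^ (α - ((k+1:ℕ):ℝ)) * (rodP α (k+1)).eval t) t := by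
  have hbase : HasDerivAt (fun s : ℝ => 1 - s^2) (-(2*t)) t := by
    simpa using ((hasDerivAt_pow 2 t).const_sub 1)
  have hr : HasDerivAt (fun s : ℝ => (1 - s^2) ^ (α - k))
      (((α - k) * (1 - t^2) ^ (α - (k:ℝ) - 1)) * (-(2*t))) t :=
    (hbase.rpow_const (p := α - k) (Or.inl h0.ne')).congr_deriv (by ring)
  have hp := (rodP α k).hasDerivAt t
  have h := hr.mul hp
  refine h.congr_deriv ?_
  have e1 : (1 - t^2) ^ (α - (k:ℝ)) = (1 - t^2) ^ (α - (k:ℝ) - 1) * (1 - t^2) := by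
    have h := Real.rpow_add h0 (α - (k:ℝ) - 1) 1
    rw [Real.rpow_one] at h
    rw [← h]
    congr 1
    ring
  have e2 : (α - ((k+1:ℕ):ℝ)) = α - (k:ℝ) - 1 := by push_cast; ring
  rw [e2, rodP]
  simp only [Polynomial.eval_add, Polynomial.eval_mul, Polynomial.eval_C, Polynomial.eval_X,
    Polynomial.eval_sub, Polynomial.eval_one, Polynomial.eval_pow]
  rw [e1]
  ring

lemma iterD_eq (α : ℝ) (k : ℕ) {t : ℝ} (ht : t ∈ Set.Ioo (-1:ℝ) 1) :
    iteratedDeriv k (fun s : ℝ => (1 - s^2) ^ α) t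
      = (1 - t^2) ^ (α - (k:ℝ)) * (rodP α k).eval t := by
  induction k generalizing t with
  | zero => simp [rodP]
  | succ k ih =>
    have h0 : 0 < 1 - t^2 := by nlinarith [ht.1, ht.2]
    rw [iteratedDeriv_succ]
    have heq : iteratedDeriv k (fun s : ℝ => (1 - s^2) ^ α)
        =ᶠ[nhds t] fun s => (1 - s^2) ^ (α - (k:ℝ)) * (rodP α k).eval s :=
      Filter.eventuallyEq_of_mem (isOpen_Ioo.mem_nhds ht) (fun s hs => ih hs)
    rw [heq.deriv_eq]
    exact (aux_hasDerivAt α k h0).deriv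

lemma cont_v {c : ℝ} (hc : 0 ≤ c) (p : Polynomial ℝ) :
    Continuous (fun t : ℝ => (1 - t^2)^c * p.eval t) :=
  ((continuous_const.sub (continuous_pow 2)).rpow_const (fun _ => Or.inr hc)).mul
    p.continuous

lemma intInt {c : ℝ} (hc : -1 < c) (p : Polynomial ℝ) :
    IntervalIntegrable (fun t : ℝ => (1 - t^2)^c * p.eval t) volume (-1) 1 := by
  have half : ∀ q : Polynomial ℝ,
      IntervalIntegrable (fun t : ℝ => (1 - t^2)^c * q.eval t) volume 0 1 := by
    intro q
    have h1 : IntervalIntegrable (fun t : ℝ => (1 - t)^c) volume 0 1 := by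
      have h := (intervalIntegral.intervalIntegrable_rpow' (a := 0) (b := 1) hc).comp_sub_left 1
      simpa using h.symm
    have h2 : ContinuousOn (fun t : ℝ => (1 + t)^c * q.eval t) (Set.uIcc 0 1) := by
      refine ContinuousOn.mul ?_ q.continuous.continuousOn
      refine ContinuousOn.rpow_const ?_ ?_
      · fun_prop
      · intro x hx
        rw [Set.uIcc_of_le (by norm_num : (0:ℝ) ≤ 1)] at hx
        exact Or.inl (by nlinarith [hx.1])
    have h3 := h1.mul_continuousOn h2
    rw [intervalIntegrable_iff, Set.uIoc_of_le (by norm_num : (0:ℝ) ≤ 1)] at h3 ⊢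
    rw [integrableOn_Ioc_iff_integrableOn_Ioo] at h3 ⊢
    refine h3.congr_fun (fun t ht => ?_) measurableSet_Ioo
    have h1t : (0:ℝ) ≤ 1 - t := by linarith [ht.2]
    have h2t : (0:ℝ) ≤ 1 + t := by linarith [ht.1]
    beta_reduce
    rw [← mul_assoc, ← Real.mul_rpow h1t h2t, show (1-t)*(1+t) = 1 - t^2 by ring]
  have hneg : IntervalIntegrable (fun t : ℝ => (1 - t^2)^c * p.eval t) volume (-1) 0 := by
    have h := (IntervalIntegrable.iff_comp_neg (by simp)).mp (half (p.comp (-Polynomial.X)))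
    rw [neg_zero] at h
    have h2 := h.symm
    have hfun : (fun x : ℝ => (1 - (-x)^2)^c * (p.comp (-Polynomial.X)).eval (-x))
        = fun x : ℝ => (1 - x^2)^c * p.eval x := by
      funext x; simp [Polynomial.eval_comp, neg_sq]
    simpa [hfun] using h2
  exact hneg.trans (half p)


lemma ibp_step (α : ℝ) (k : ℕ) (hk0 : 0 < α - (k:ℝ)) (hk1 : (-1:ℝ) < α - ((k+1:ℕ):ℝ))
    (g : Polynomial ℝ) :
    ∫ t in (-1:ℝ)..1, g.eval t * ((1 - t^2) ^ (α - ((k+1:ℕ):ℝ)) * (rodP α (k+1)).eval t)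
      = - ∫ t in (-1:ℝ)..1, (Polynomial.derivative g).eval t *
          ((1 - t^2) ^ (α - (k:ℝ)) * (rodP α k).eval t) := by
  have h := intervalIntegral.integral_mul_deriv_eq_deriv_mul_of_hasDeriv_right
    (a := (-1:ℝ)) (b := 1)
    (u := fun t => g.eval t)
    (v := fun t => (1 - t^2) ^ (α - (k:ℝ)) * (rodP α k).eval t)
    (u' := fun t => (Polynomial.derivative g).eval t)
    (v' := fun t => (1 - t^2) ^ (α - ((k+1:ℕ):ℝ)) * (rodP α (k+1)).eval t)
    g.continuous.continuousOn (cont_v hk0.le _).continuousOn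
    (fun x _ => (g.hasDerivAt x).hasDerivWithinAt)
    (fun x hx => by
      have hx' : -1 < x ∧ x < 1 := by
        rw [show min (-1:ℝ) 1 = -1 by norm_num, show max (-1:ℝ) 1 = 1 by norm_num] at hx
        exact ⟨hx.1, hx.2⟩
      exact (aux_hasDerivAt α k (by nlinarith [hx'.1, hx'.2])).hasDerivWithinAt)
    ((Polynomial.derivative g).continuous.intervalIntegrable _ _)
    (intInt hk1 _)
  rw [h]
  norm_num [Real.zero_rpow hk0.ne']

lemma ibp_iter (α : ℝ) (m : ℕ) (h1 : ∀ k : ℕ, k < m → 0 < α - (k:ℝ))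
    (h2 : ∀ k : ℕ, k ≤ m → (-1:ℝ) < α - (k:ℝ)) (g : Polynomial ℝ) :
    ∀ j, j ≤ m →
      (∫ t in (-1:ℝ)..1, g.eval t * ((1 - t^2) ^ (α - (m:ℝ)) * (rodP α m).eval t))
      = (-1:ℝ)^j * ∫ t in (-1:ℝ)..1, (Polynomial.derivative^[j] g).eval t *
          ((1 - t^2) ^ (α - ((m-j:ℕ):ℝ)) * (rodP α (m-j)).eval t) := by
  intro j
  induction j with
  | zero => intro _; simp
  | succ j ih =>
    intro hj
    rw [ih (by omega)]
    have hmj : m - j = (m - (j+1)) + 1 := by omega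
    rw [hmj, ibp_step α (m - (j+1)) (h1 _ (by omega))
      (by
        have h := h2 (m - (j+1) + 1) (by omega)
        push_cast at h ⊢
        linarith) (Polynomial.derivative^[j] g)]
    rw [Function.iterate_succ_apply']
    ring

lemma ibp_final (α : ℝ) (m : ℕ) (h1 : ∀ k : ℕ, k < m → 0 < α - (k:ℝ))
    (h2 : ∀ k : ℕ, k ≤ m → (-1:ℝ) < α - (k:ℝ)) (g : Polynomial ℝ) :
    (∫ t in (-1:ℝ)..1, g.eval t * ((1 - t^2) ^ (α - (m:ℝ)) * (rodP α m).eval t))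
      = (-1:ℝ)^m * ∫ t in (-1:ℝ)..1, (Polynomial.derivative^[m] g).eval t * (1 - t^2) ^ α := by
  have h := ibp_iter α m h1 h2 g m le_rfl
  simpa [rodP, Nat.sub_self] using h

lemma I_eq {β : ℝ} (hβ : -1 < β) :
    ∫ t in (-1:ℝ)..1, (1 - t^2) ^ β
      = Real.Gamma (1/2) * Real.Gamma (β+1) / Real.Gamma (β + 3/2) := by
  set g : ℝ → ℝ := fun x => x ^ (-(1:ℝ)/2) * (1-x) ^ β with hg
  -- interval integrability of g on [0,1]
  have hg_right : IntervalIntegrable (fun x : ℝ => (1-x)^β) volume 0 1 := by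
    have h := (intervalIntegral.intervalIntegrable_rpow' (a := 0) (b := 1) hβ).comp_sub_left 1
    simpa using h.symm
  have hgl : IntervalIntegrable (fun x : ℝ => x^(-(1:ℝ)/2)) volume 0 1 :=
    intervalIntegral.intervalIntegrable_rpow' (by norm_num)
  have hJ1 : IntervalIntegrable g volume 0 (1/2) := by
    refine (hgl.mono_set ?_).mul_continuousOn ?_
    · rw [Set.uIcc_of_le (by norm_num : (0:ℝ) ≤ 1/2), Set.uIcc_of_le (by norm_num : (0:ℝ) ≤ 1)]
      exact Set.Icc_subset_Icc le_rfl (by norm_num)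
    · refine ContinuousOn.rpow_const (by fun_prop) fun x hx => Or.inl ?_
      rw [Set.uIcc_of_le (by norm_num : (0:ℝ) ≤ 1/2)] at hx
      intro h; have h2 := hx.2; linarith
  have hJ2 : IntervalIntegrable g volume (1/2) 1 := by
    refine (hg_right.mono_set ?_).continuousOn_mul ?_
    · rw [Set.uIcc_of_le (by norm_num : (1:ℝ)/2 ≤ 1), Set.uIcc_of_le (by norm_num : (0:ℝ) ≤ 1)]
      exact Set.Icc_subset_Icc (by norm_num) le_rfl
    · refine ContinuousOn.rpow_const (by fun_prop) fun x hx => Or.inl ?_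
      rw [Set.uIcc_of_le (by norm_num : (1:ℝ)/2 ≤ 1)] at hx
      have := hx.1; positivity
  have hJint : IntervalIntegrable g volume 0 1 := hJ1.trans hJ2
  -- the value of ∫ g via the complex Beta function
  have h1 : (0:ℝ) < β + 1 := by linarith
  have hbi : Complex.betaIntegral (1/2) ((β+1 : ℝ) : ℂ) = ((∫ x in (0:ℝ)..1, g x : ℝ) : ℂ) := by
    rw [Complex.betaIntegral, ← intervalIntegral.integral_ofReal]
    refine intervalIntegral.integral_congr fun x hx => ?_
    rw [Set.uIcc_of_le (by norm_num : (0:ℝ) ≤ 1)] at hx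
    have hx0 : (0:ℝ) ≤ x := hx.1
    have hx1 : (0:ℝ) ≤ 1 - x := by linarith [hx.2]
    show (x:ℂ) ^ ((1/2:ℂ) - 1) * (1 - (x:ℂ)) ^ (((β+1:ℝ):ℂ) - 1) = _
    rw [hg, Complex.ofReal_mul, Complex.ofReal_cpow hx0, Complex.ofReal_cpow hx1]
    push_cast
    ring_nf
  have hc := Complex.Gamma_mul_Gamma_eq_betaIntegral
    (s := ((1/2 : ℝ) : ℂ)) (t := ((β+1 : ℝ) : ℂ)) (by norm_num) (by simpa using h1)
  rw [show ((1/2 : ℝ) : ℂ) + ((β+1 : ℝ) : ℂ) = ((β + 3/2 : ℝ) : ℂ) by push_cast; ring] at hc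
  rw [show ((1/2 : ℝ) : ℂ) = (1/2 : ℂ) by norm_num] at hc
  rw [hbi] at hc
  rw [show (1/2 : ℂ) = ((1/2 : ℝ) : ℂ) by norm_num] at hc
  rw [Complex.Gamma_ofReal, Complex.Gamma_ofReal, Complex.Gamma_ofReal] at hc
  have hc' : Real.Gamma (1/2) * Real.Gamma (β+1) = Real.Gamma (β + 3/2) * ∫ x in (0:ℝ)..1, g x := by
    exact_mod_cast hc
  have hΓpos : 0 < Real.Gamma (β + 3/2) := Real.Gamma_pos_of_pos (by linarith)
  have hJval : ∫ x in (0:ℝ)..1, g x = Real.Gamma (1/2) * Real.Gamma (β+1) / Real.Gamma (β + 3/2) := by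
    rw [eq_div_iff hΓpos.ne']
    linear_combination -hc'
  -- substitution x = t^2
  have himsub : (fun t : ℝ => t^2) '' Set.Ioo 0 1 ⊆ Set.Ioo 0 1 := by
    rintro _ ⟨t, ht, rfl⟩
    show t^2 ∈ Set.Ioo (0:ℝ) 1
    refine ⟨pow_pos ht.1 2, ?_⟩
    have h3 : (0:ℝ) < (1-t)*(1+t) := mul_pos (by linarith [ht.2]) (by linarith [ht.1])
    nlinarith [h3]
  have hsub := intervalIntegral.integral_comp_smul_deriv''' (a := (0:ℝ)) (b := 1)
    (f := fun t : ℝ => t^2) (f' := fun t => 2*t) (g := g)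
    ((continuous_pow 2).continuousOn)
    (fun x _ => by simpa using (hasDerivAt_pow 2 x).hasDerivWithinAt)
    ?_ ?_ ?_
  · -- conclude
    have hw : IntervalIntegrable (fun t : ℝ => (1-t^2)^β) volume (-1) 1 := by
      have h := intInt hβ (1 : Polynomial ℝ); simpa using h
    have hw0 : IntervalIntegrable (fun t : ℝ => (1-t^2)^β) volume (-1) 0 :=
      hw.mono_set (by rw [Set.uIcc_of_le (by norm_num : (-1:ℝ) ≤ 0),
        Set.uIcc_of_le (by norm_num : (-1:ℝ) ≤ 1)]; exact Set.Icc_subset_Icc le_rfl (by norm_num))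
    have hw1 : IntervalIntegrable (fun t : ℝ => (1-t^2)^β) volume 0 1 :=
      hw.mono_set (by rw [Set.uIcc_of_le (by norm_num : (0:ℝ) ≤ 1),
        Set.uIcc_of_le (by norm_num : (-1:ℝ) ≤ 1)]; exact Set.Icc_subset_Icc (by norm_num) le_rfl)
    have hsplit := intervalIntegral.integral_add_adjacent_intervals hw0 hw1
    have hrefl : (∫ t in (-1:ℝ)..0, (1-t^2)^β) = ∫ t in (0:ℝ)..1, (1-t^2)^β := by
      have h := intervalIntegral.integral_comp_neg (a := (0:ℝ)) (b := 1)
        (f := fun t : ℝ => (1-t^2)^β)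
      simp only [neg_sq, neg_zero] at h
      exact h.symm
    have hmid : (∫ t in (0:ℝ)..1, (2*t) • g (t^2)) = 2 * ∫ t in (0:ℝ)..1, (1-t^2)^β := by
      rw [← intervalIntegral.integral_const_mul]
      refine intervalIntegral.integral_congr_ae (Filter.Eventually.of_forall fun t ht => ?_)
      rw [Set.uIoc_of_le (by norm_num : (0:ℝ) ≤ 1)] at ht
      have ht0 : 0 < t := ht.1
      rw [hg]
      have h2 : ((t^2 : ℝ))^(-(1:ℝ)/2) = t⁻¹ := by
        rw [← Real.rpow_natCast t 2, ← Real.rpow_mul ht0.le]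
        norm_num [Real.rpow_neg_one]
      beta_reduce
      rw [h2, smul_eq_mul]
      field_simp
    have hsub' : (∫ t in (0:ℝ)..1, (2*t) • g (t^2)) = ∫ u in (0:ℝ)..1, g u := by
      have h := hsub
      simp only [Function.comp] at h
      norm_num at h
      convert h using 2 <;> norm_num
    rw [hmid] at hsub'
    rw [hJval] at hsub'
    linarith [hsplit, hrefl, hsub']
  · exact (ContinuousOn.mul
      (ContinuousOn.rpow_const continuousOn_id fun x hx => Or.inl (ne_of_gt (himsub hx).1))
      (ContinuousOn.rpow_const (continuousOn_const.sub continuousOn_id)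
        fun x hx => Or.inl (by have := (himsub hx).2; intro hh; simp at hh; linarith))).mono
      (fun y hy => by
        rw [show min (0:ℝ) 1 = 0 by norm_num, show max (0:ℝ) 1 = 1 by norm_num] at hy
        exact hy)
  · -- IntegrableOn g (f '' [[0,1]])
    refine MeasureTheory.IntegrableOn.mono_set ?_
      (show (fun t : ℝ => t^2) '' (Set.uIcc 0 1) ⊆ Set.Icc 0 1 by
        rintro _ ⟨t, ht, rfl⟩
        rw [Set.uIcc_of_le (by norm_num : (0:ℝ) ≤ 1)] at ht
        show t^2 ∈ Set.Icc (0:ℝ) 1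
        exact ⟨by positivity, pow_le_one₀ ht.1 ht.2⟩)
    rw [integrableOn_Icc_iff_integrableOn_Ioc]
    rw [intervalIntegrable_iff, Set.uIoc_of_le (by norm_num : (0:ℝ) ≤ 1)] at hJint
    exact hJint
  · -- IntegrableOn (fun x => (2*x) • (g ∘ f) x) [[0,1]]
    rw [Set.uIcc_of_le (by norm_num : (0:ℝ) ≤ 1),
      integrableOn_Icc_iff_integrableOn_Ioc]
    have h2v : IntervalIntegrable (fun t : ℝ => (1-t^2)^β * (Polynomial.C (2:ℝ)).eval t)
        volume 0 1 :=
      (intInt hβ _).mono_set (by rw [Set.uIcc_of_le (by norm_num : (0:ℝ) ≤ 1),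
        Set.uIcc_of_le (by norm_num : (-1:ℝ) ≤ 1)]; exact Set.Icc_subset_Icc (by norm_num) le_rfl)
    rw [intervalIntegrable_iff, Set.uIoc_of_le (by norm_num : (0:ℝ) ≤ 1)] at h2v
    refine h2v.congr_fun (fun t ht => ?_) measurableSet_Ioc
    have ht0 : 0 < t := ht.1
    simp only [hg, Polynomial.eval_C, Function.comp, smul_eq_mul]
    beta_reduce
    have h2 : ((t^2 : ℝ))^(-(1:ℝ)/2) = t⁻¹ := by
      rw [← Real.rpow_natCast t 2, ← Real.rpow_mul ht0.le]
      norm_num [Real.rpow_neg_one]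
    rw [h2]
    field_simp

noncomputable def Cg (lam : ℝ) (m : ℕ) : ℝ :=
  (-1:ℝ)^m * poch (2*lam) m / (2^m * (m.factorial : ℝ) * poch (lam + 1/2) m)

noncomputable def Gp (lam : ℝ) (n : ℕ) : Polynomial ℝ :=
  Polynomial.C (Cg lam n) * rodP (lam + (n:ℝ) - 1/2) n

lemma Gp_natDegree (lam : ℝ) (n : ℕ) : (Gp lam n).natDegree ≤ n :=
  (Polynomial.natDegree_C_mul_le _ _).trans (rodP_natDegree _ n)

lemma key_alg (F P1 P2 P3 P4 G1 G2 G3 tw : ℝ) (hF : F ≠ 0) (h1 : P1 ≠ 0) (h2 : P2 ≠ 0)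
    (h3 : P3 ≠ 0) (hG1 : G1 ≠ 0) (hG2 : G2 ≠ 0) (hG3 : G3 ≠ 0) (htw : tw ≠ 0) :
    F / (P1 * (G2 * G1 / G3)) * (F * (P1^2/(tw*F*P2)^2) * (tw*tw*P4*P2/P1)
      * (G1*(P2*G2)/(P3*G3))) = P4 / P3 := by
  field_simp

lemma Cg_def (lam : ℝ) (m : ℕ) :
    Cg lam m = (-1:ℝ)^m * poch (2*lam) m / (2^m * (m.factorial : ℝ) * poch (lam + 1/2) m) := rfl

lemma geg_eq (lam : ℝ) (n : ℕ) {t : ℝ} (ht : t ∈ Set.Ioo (-1:ℝ) 1) :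
    geg lam n t = (Gp lam n).eval t := by
  have h0 : 0 < 1 - t^2 := by nlinarith [ht.1, ht.2]
  simp only [geg, Gp, Polynomial.eval_mul, Polynomial.eval_C, Cg]
  rw [iterD_eq (lam + (n:ℝ) - 1/2) n ht]
  have hcomb : (1-t^2)^((1:ℝ)/2 - lam) * (1-t^2)^((lam + (n:ℝ) - 1/2) - (n:ℝ)) = 1 := by
    rw [← Real.rpow_add h0,
      show (1:ℝ)/2 - lam + (lam + (n:ℝ) - 1/2 - (n:ℝ)) = 0 by ring, Real.rpow_zero]
  linear_combination ((-1:ℝ)^n * poch (2*lam) n / (2^n * (n.factorial : ℝ) * poch (lam + 1/2) n)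
      * (rodP (lam + (n:ℝ) - 1/2) n).eval t) * hcomb

lemma geg_weight_eq (lam : ℝ) (m : ℕ) {t : ℝ} (ht : t ∈ Set.Ioo (-1:ℝ) 1) :
    geg lam m t * (1 - t^2)^(lam - 1/2)
      = Cg lam m * ((1 - t^2) ^ ((lam + (m:ℝ) - 1/2) - (m:ℝ))
          * (rodP (lam + (m:ℝ) - 1/2) m).eval t) := by
  have h0 : 0 < 1 - t^2 := by nlinarith [ht.1, ht.2]
  simp only [geg, Cg]
  rw [iterD_eq (lam + (m:ℝ) - 1/2) m ht]
  have hcomb : (1-t^2)^((1:ℝ)/2 - lam) * (1-t^2)^(lam - 1/2) = 1 := by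
    rw [← Real.rpow_add h0, show (1:ℝ)/2 - lam + (lam - 1/2) = 0 by ring, Real.rpow_zero]
  linear_combination ((-1:ℝ)^m * poch (2*lam) m / (2^m * (m.factorial : ℝ) * poch (lam + 1/2) m)
      * ((1 - t^2) ^ ((lam + (m:ℝ) - 1/2) - (m:ℝ)) * (rodP (lam + (m:ℝ) - 1/2) m).eval t)) * hcomb

lemma int_eq (lam : ℝ) (hlam : 0 < lam) (m n : ℕ) :
    (∫ t in (-1:ℝ)..1, geg lam n t * geg lam m t * (1 - t^2)^(lam - 1/2))
      = Cg lam m * ((-1:ℝ)^m *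
          ∫ t in (-1:ℝ)..1, (Polynomial.derivative^[m] (Gp lam n)).eval t
            * (1 - t^2) ^ (lam + (m:ℝ) - 1/2)) := by
  have h1 : ∀ k : ℕ, k < m → 0 < (lam + (m:ℝ) - 1/2) - (k:ℝ) := by
    intro k hk
    have : (k:ℝ) + 1 ≤ (m:ℝ) := by exact_mod_cast hk
    linarith
  have h2 : ∀ k : ℕ, k ≤ m → (-1:ℝ) < (lam + (m:ℝ) - 1/2) - (k:ℝ) := by
    intro k hk
    have : (k:ℝ) ≤ (m:ℝ) := by exact_mod_cast hk
    linarith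
  have hae : ∀ᵐ (x : ℝ), x ≠ (1:ℝ) := by
    refine (MeasureTheory.ae_iff).mpr ?_
    have h : {x : ℝ | ¬ x ≠ (1:ℝ)} = {(1:ℝ)} := by ext x; simp
    rw [h]
    exact measure_singleton 1
  have hstep : (∫ t in (-1:ℝ)..1, geg lam n t * geg lam m t * (1 - t^2)^(lam - 1/2))
      = ∫ t in (-1:ℝ)..1, Cg lam m * ((Gp lam n).eval t
          * ((1 - t^2) ^ ((lam + (m:ℝ) - 1/2) - (m:ℝ))
            * (rodP (lam + (m:ℝ) - 1/2) m).eval t)) := by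
    refine intervalIntegral.integral_congr_ae ?_
    filter_upwards [hae] with t ht1 htmem
    rw [Set.uIoc_of_le (by norm_num : (-1:ℝ) ≤ 1)] at htmem
    have ht : t ∈ Set.Ioo (-1:ℝ) 1 := ⟨htmem.1, lt_of_le_of_ne htmem.2 ht1⟩
    rw [geg_eq lam n ht]
    calc (Gp lam n).eval t * geg lam m t * (1 - t^2)^(lam - 1/2)
        = (Gp lam n).eval t * (geg lam m t * (1 - t^2)^(lam - 1/2)) := by ring
      _ = _ := by rw [geg_weight_eq lam m ht]; ring
  rw [hstep, intervalIntegral.integral_const_mul,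
    ibp_final (lam + (m:ℝ) - 1/2) m h1 h2 (Gp lam n)]

lemma rodP_coeff_top (lam : ℝ) (n : ℕ) :
    (rodP (lam + (n:ℝ) - 1/2) n).coeff n = (-1:ℝ)^n * poch (2*lam + n) n := by
  rw [rodP_coeff]
  have h1 : ∀ i ∈ Finset.range n, -(2*(lam + (n:ℝ) - 1/2) - (i:ℝ))
      = (-1) * (2*lam + (n:ℝ) + ((n - 1 - i : ℕ) : ℝ)) := by
    intro i hi
    rw [Finset.mem_range] at hi
    rw [Nat.sub_sub, Nat.cast_sub (by omega : 1 + i ≤ n)]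
    push_cast
    ring
  rw [Finset.prod_congr rfl h1, Finset.prod_mul_distrib, Finset.prod_const]
  congr 1
  · simp
  · rw [show (fun i => 2*lam + (n:ℝ) + ((n - 1 - i : ℕ) : ℝ)) = fun i => (fun j : ℕ => 2*lam + (n:ℝ) + (j:ℝ)) (n - 1 - i) from rfl]
    rw [Finset.prod_range_reflect (fun j : ℕ => 2*lam + (n:ℝ) + (j:ℝ)) n]
    rw [poch]

theorem stmt12_aux (lam : ℝ) (hlam : 0 < lam) (m n : ℕ) :
    ((m.factorial : ℝ) / (poch (2 * lam) m * betaR (lam + 1 / 2) (1 / 2)))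
        * ∫ t in (-1 : ℝ)..1, geg lam n t * geg lam m t * (1 - t ^ 2) ^ (lam - 1 / 2)
      = (if m = n then (1 : ℝ) else 0) * (lam / ((n : ℝ) + lam)) := by
  rcases eq_or_ne m n with rfl | hne
  · -- diagonal case, m = n
    rw [int_eq lam hlam m m, if_pos rfl]
    have hq : Polynomial.derivative^[m] (Gp lam m)
        = Polynomial.C ((m.factorial : ℝ) * (Gp lam m).coeff m) := by
      have hdeg : (Polynomial.derivative^[m] (Gp lam m)).natDegree ≤ 0 :=
        (Polynomial.natDegree_iterate_derivative _ _).trans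
          (by have := Gp_natDegree lam m; omega)
      rw [Polynomial.eq_C_of_natDegree_le_zero hdeg, Polynomial.coeff_iterate_derivative]
      congr 1
      simp [Nat.descFactorial_self]
    rw [hq]
    simp only [Polynomial.eval_C]
    rw [intervalIntegral.integral_const_mul]
    rw [I_eq (by linarith : (-1:ℝ) < lam + (m:ℝ) - 1/2)]
    have hcoeff : (Gp lam m).coeff m = Cg lam m * ((-1:ℝ)^m * poch (2*lam + m) m) := by
      rw [Gp, Polynomial.coeff_C_mul, rodP_coeff_top]
    rw [hcoeff]
    -- now pure scalar algebra
    have e0 : betaR (lam + 1/2) (1/2)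
        = Real.Gamma (lam + 1/2) * Real.Gamma (1/2) / Real.Gamma (lam + 1) := by
      rw [betaR, show lam + 1/2 + 1/2 = lam + 1 by ring]
    have e1 : Real.Gamma ((lam + (m:ℝ) - 1/2) + 1)
        = poch (lam + 1/2) m * Real.Gamma (lam + 1/2) := by
      rw [show (lam + (m:ℝ) - 1/2) + 1 = (lam + 1/2) + (m:ℝ) by ring]
      exact Gamma_poch (by linarith) m
    have e2 : Real.Gamma ((lam + (m:ℝ) - 1/2) + 3/2)
        = poch (lam + 1) m * Real.Gamma (lam + 1) := by
      rw [show (lam + (m:ℝ) - 1/2) + 3/2 = (lam + 1) + (m:ℝ) by ring]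
      exact Gamma_poch (by linarith) m
    have e3 : poch (2*lam) m * poch (2*lam + (m:ℝ)) m
        = 4^m * poch lam m * poch (lam + 1/2) m := by
      have h := poch_add (2*lam) m m
      rw [← h, show m + m = 2*m from (two_mul m).symm, poch_double]
    have e4 : poch lam m * (lam + m) = lam * poch (lam + 1) m := poch_shift lam m
    have hsign : (-1:ℝ)^m * (-1:ℝ)^m = 1 := by
      rw [← pow_add, ← two_mul, pow_mul]
      norm_num
    have hG1 : 0 < Real.Gamma (1/2) := Real.Gamma_pos_of_pos (by norm_num)
    have hG2 : 0 < Real.Gamma (lam + 1/2) := Real.Gamma_pos_of_pos (by linarith)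
    have hG3 : 0 < Real.Gamma (lam + 1) := Real.Gamma_pos_of_pos (by linarith)
    have hP1 : 0 < poch (2*lam) m := poch_pos (by linarith) m
    have hP2 : 0 < poch (lam + 1/2) m := poch_pos (by linarith) m
    have hP3 : 0 < poch (lam + 1) m := poch_pos (by linarith) m
    have hP4 : 0 < poch lam m := poch_pos hlam m
    have hF : (0:ℝ) < (m.factorial : ℝ) := by exact_mod_cast m.factorial_pos
    have hlm : (0:ℝ) < (m:ℝ) + lam := by positivity
    rw [e0, e1, e2]
    have hL : Cg lam m * ((-1:ℝ)^m * ((m.factorial : ℝ)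
          * (Cg lam m * ((-1:ℝ)^m * poch (2*lam + (m:ℝ)) m))
          * (Real.Gamma (1/2) * (poch (lam + 1/2) m * Real.Gamma (lam + 1/2))
              / (poch (lam + 1) m * Real.Gamma (lam + 1)))))
        = ((-1:ℝ)^m * (-1:ℝ)^m) * ((m.factorial : ℝ) * Cg lam m^2 * poch (2*lam + (m:ℝ)) m
          * (Real.Gamma (1/2) * (poch (lam + 1/2) m * Real.Gamma (lam + 1/2))
              / (poch (lam + 1) m * Real.Gamma (lam + 1)))) := by ring
    rw [hL, hsign, one_mul]
    have hsq : ((-1:ℝ)^m)^2 = 1 := by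
      rw [← pow_mul, mul_comm, pow_mul]; norm_num
    have hCgsq : Cg lam m ^ 2
        = poch (2*lam) m ^ 2 / (2^m * (m.factorial : ℝ) * poch (lam + 1/2) m)^2 := by
      rw [Cg_def, div_pow, mul_pow, hsq, one_mul]
    rw [hCgsq]
    have e3' : poch (2*lam + (m:ℝ)) m = 4^m * poch lam m * poch (lam + 1/2) m / poch (2*lam) m := by
      rw [eq_div_iff hP1.ne']
      linear_combination e3
    have h4 : (4:ℝ)^m = 2^m * 2^m := by rw [← mul_pow]; norm_num
    have n8 : ((m:ℝ) + lam) ≠ 0 := hlm.ne'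
    have key : (m.factorial : ℝ) / (poch (2*lam) m
          * (Real.Gamma (lam + 1/2) * Real.Gamma (1/2) / Real.Gamma (lam + 1)))
        * ((m.factorial : ℝ)
          * (poch (2*lam) m ^ 2 / (2^m * (m.factorial : ℝ) * poch (lam + 1/2) m)^2)
          * poch (2*lam + (m:ℝ)) m
          * (Real.Gamma (1/2) * (poch (lam + 1/2) m * Real.Gamma (lam + 1/2))
              / (poch (lam + 1) m * Real.Gamma (lam + 1))))
        = poch lam m / poch (lam + 1) m := by
      rw [e3', h4]
      exact key_alg _ _ _ _ _ _ _ _ _ hF.ne' hP1.ne' hP2.ne' hP3.ne'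
        hG1.ne' hG2.ne' hG3.ne' (by positivity)
    rw [key, one_mul, div_eq_div_iff hP3.ne' n8]
    linear_combination e4
  · -- off-diagonal
    rw [if_neg hne, zero_mul]
    rcases lt_or_gt_of_ne hne with h | h
    · -- m < n : integrate by parts n times
      have hcomm : (∫ t in (-1:ℝ)..1, geg lam n t * geg lam m t * (1 - t^2)^(lam - 1/2))
          = ∫ t in (-1:ℝ)..1, geg lam m t * geg lam n t * (1 - t^2)^(lam - 1/2) :=
        intervalIntegral.integral_congr fun t _ => by ring
      rw [hcomm, int_eq lam hlam n m,
        Polynomial.iterate_derivative_eq_zero (lt_of_le_of_lt (Gp_natDegree lam m) h)]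
      simp
    · -- n < m
      rw [int_eq lam hlam m n,
        Polynomial.iterate_derivative_eq_zero (lt_of_le_of_lt (Gp_natDegree lam n) h)]
      simp

end S12

/-- orthogonality of the Gegenbauer polynomials. -/
theorem stmt12 (lam : ℝ) (hlam : 0 < lam) (m n : ℕ) :
    ((m.factorial : ℝ) / (poch (2 * lam) m * betaR (lam + 1 / 2) (1 / 2)))
        * ∫ t in (-1 : ℝ)..1, geg lam n t * geg lam m t * (1 - t ^ 2) ^ (lam - 1 / 2)
      = (if m = n then (1 : ℝ) else 0) * (lam / ((n : ℝ) + lam)) :=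
  S12.stmt12_aux lam hlam m n
end
end

section
/- For x ∈ ℝ^d with ρ = ‖x‖ > 0, a homogeneous harmonic polynomial q of degree m, and a non-negative integer j, one has q(∇) ρ^{2j} = [((1/ρ) d/dρ)^m ρ^{2j}] · q(x); in particular ((1/ρ) d/dρ)^m ρ^{2j} = 0 when j < m and equals (2^m j!/(j-m)!) ρ^{2j-2m} when j ≥ m. -/
open MeasureTheory MvPolynomial Finset Metric Topology Asymptotics Real

noncomputable section

/-- The operator `g ↦ (1/ρ) dg/dρ` on functions of one variable. -/
def rD (g : ℝ → ℝ) : ℝ → ℝ := fun ρ => deriv g ρ / ρ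

namespace Stmt15Aux
open MvPolynomial

abbrev P (d : ℕ) := MvPolynomial (Fin d) ℝ

variable {d : ℕ}

/-- The coefficient `c_{m,j}`. -/
def cc (m j : ℕ) : ℝ := if m ≤ j then 2 ^ m * (j.factorial : ℝ) / ((j - m).factorial : ℝ) else 0

lemma pderiv_comm' (i j : Fin d) (p : P d) :
    pderiv i (pderiv j p) = pderiv j (pderiv i p) := by
  induction p using MvPolynomial.induction_on' with
  | monomial s a =>
    rcases eq_or_ne i j with rfl | hij
    · rfl
    · simp only [pderiv_monomial, Finsupp.tsub_apply, Finsupp.single_apply,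
        if_neg hij, if_neg hij.symm, Nat.sub_zero]
      rw [tsub_right_comm]
      ring_nf
  | add p q hp hq => simp [hp, hq]

lemma iter_pd_comm (j i : Fin d) (n : ℕ) (p : P d) :
    (fun q : P d => pderiv j q)^[n] (pderiv i p)
      = pderiv i ((fun q : P d => pderiv j q)^[n] p) := by
  induction n generalizing p with
  | zero => rfl
  | succ n ih =>
    rw [Function.iterate_succ_apply, Function.iterate_succ_apply]
    show (fun q : P d => pderiv j q)^[n] (pderiv j (pderiv i p)) = _
    rw [pderiv_comm' j i, ih]

/-- fold of pderiv iterates over a list -/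
def Fp (s : Fin d →₀ ℕ) (l : List (Fin d)) : P d → P d :=
  (l.map (fun j => (fun q : P d => pderiv j q)^[s j])).foldr (fun g h => g ∘ h) id

lemma mpderiv_eq (s : Fin d →₀ ℕ) (p : P d) : mpderiv s p = Fp s (List.finRange d) p := rfl

lemma Fp_cons (s : Fin d →₀ ℕ) (a : Fin d) (l : List (Fin d)) (p : P d) :
    Fp s (a :: l) p = (fun q : P d => pderiv a q)^[s a] (Fp s l p) := rfl

lemma Fp_pd_comm (l : List (Fin d)) (s : Fin d →₀ ℕ) (i : Fin d) (p : P d) :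
    Fp s l (pderiv i p) = pderiv i (Fp s l p) := by
  induction l with
  | nil => rfl
  | cons a l ih => rw [Fp_cons, Fp_cons, ih, iter_pd_comm]

lemma Fp_iter_comm (l : List (Fin d)) (s : Fin d →₀ ℕ) (i : Fin d) (n : ℕ) (p : P d) :
    Fp s l ((fun q : P d => pderiv i q)^[n] p)
      = (fun q : P d => pderiv i q)^[n] (Fp s l p) := by
  induction n generalizing p with
  | zero => rfl
  | succ n ih =>
    rw [Function.iterate_succ_apply, Function.iterate_succ_apply]
    show Fp s l ((fun q : P d => pderiv i q)^[n] (pderiv i p)) = _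
    rw [ih, Fp_pd_comm]

lemma Fp_add (s t : Fin d →₀ ℕ) (l : List (Fin d)) (p : P d) :
    Fp (s + t) l p = Fp s l (Fp t l p) := by
  induction l with
  | nil => rfl
  | cons a l ih =>
    rw [Fp_cons, Fp_cons, Fp_cons, ih, Finsupp.add_apply, Function.iterate_add_apply,
      Fp_iter_comm]

lemma Fp_zero (l : List (Fin d)) (p : P d) : Fp (0 : Fin d →₀ ℕ) l p = p := by
  induction l with
  | nil => rfl
  | cons a l ih => rw [Fp_cons, ih]; rfl

lemma Fp_single (i : Fin d) (l : List (Fin d)) (p : P d) :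
    Fp (Finsupp.single i 1) l p = (fun q : P d => pderiv i q)^[l.count i] p := by
  induction l with
  | nil => rfl
  | cons a l ih =>
    rw [Fp_cons, ih]
    rcases eq_or_ne a i with rfl | h
    · rw [Finsupp.single_eq_same, List.count_cons_self,
        show (fun q : P d => pderiv a q)^[1] = (fun q : P d => pderiv a q) from
          Function.iterate_one _]
      exact (Function.iterate_succ_apply' _ _ _).symm
    · rw [Finsupp.single_apply, if_neg (Ne.symm h), List.count_cons_of_ne h]
      rfl

lemma mpderiv_zero (p : P d) : mpderiv (0 : Fin d →₀ ℕ) p = p := Fp_zero _ _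

lemma mpderiv_add (s t : Fin d →₀ ℕ) (p : P d) :
    mpderiv (s + t) p = mpderiv s (mpderiv t p) := Fp_add _ _ _ _

lemma mpderiv_single (i : Fin d) (p : P d) :
    mpderiv (Finsupp.single i 1) p = pderiv i p := by
  rw [mpderiv_eq, Fp_single,
    List.count_eq_one_of_mem (List.nodup_finRange d) (List.mem_finRange i)]
  rfl

lemma dop_monomial (s : Fin d →₀ ℕ) (a : ℝ) (p : P d) :
    dop (monomial s a) p = a • mpderiv s p := by
  unfold dop
  exact sum_monomial_eq (b := fun s c => c • mpderiv s p) (by rw [zero_smul])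

lemma dop_add (q r p : P d) : dop (q + r) p = dop q p + dop r p := by
  unfold dop
  rw [AddMonoidAlgebra.coeff_add]
  exact Finsupp.sum_add_index' (fun s => zero_smul _ _) (fun s c₁ c₂ => add_smul _ _ _)

lemma dop_zero (p : P d) : dop (0 : P d) p = 0 := by
  unfold dop; rw [AddMonoidAlgebra.coeff_zero]; exact Finsupp.sum_zero_index

lemma dop_nsmul (n : ℕ) (q p : P d) : dop (n • q) p = n • dop q p := by
  induction n with
  | zero => simp [dop_zero]
  | succ n ih => rw [succ_nsmul, succ_nsmul, dop_add, ih]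

lemma dop_sum {ι : Type*} (t : Finset ι) (f : ι → P d) (p : P d) :
    dop (∑ i ∈ t, f i) p = ∑ i ∈ t, dop (f i) p := by
  classical
  induction t using Finset.induction_on with
  | empty => simp [dop_zero]
  | insert a s h ih => rw [Finset.sum_insert h, Finset.sum_insert h, dop_add, ih]

lemma dop_C (a : ℝ) (p : P d) : dop (C a : P d) p = a • p := by
  rw [show (C a : P d) = monomial 0 a from rfl, dop_monomial, mpderiv_zero]

lemma X_mul_monomial' (i : Fin d) (s : Fin d →₀ ℕ) (a : ℝ) :
    (X i : P d) * monomial s a = monomial (Finsupp.single i 1 + s) a := by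
  rw [monomial_single_add, pow_one]

lemma dop_X_mul (i : Fin d) (r p : P d) :
    dop (X i * r) p = pderiv i (dop r p) := by
  induction r using MvPolynomial.induction_on' with
  | monomial s a =>
    rw [X_mul_monomial', dop_monomial, dop_monomial, mpderiv_add, mpderiv_single,
      Derivation.map_smul]
  | add r₁ r₂ h₁ h₂ => rw [mul_add, dop_add, dop_add, h₁, h₂, map_add]

lemma degree_univ (s : Fin d →₀ ℕ) : ∑ i : Fin d, s i = Finsupp.degree s :=
  (Finset.sum_subset (Finset.subset_univ _)
    (fun x _ hx => Finsupp.notMem_support_iff.mp hx)).symm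

lemma nat_smul_poly (n : ℕ) (p : P d) : n • p = (n : ℝ) • p :=
  (Nat.cast_smul_eq_nsmul ℝ n p).symm

lemma euler_monomial (s : Fin d →₀ ℕ) (a : ℝ) :
    ∑ i : Fin d, X i * pderiv i (monomial s a) = (Finsupp.degree s) • monomial s a := by
  rw [← degree_univ, Finset.sum_smul]
  refine Finset.sum_congr rfl fun i _ => ?_
  rw [pderiv_monomial]
  rcases Nat.eq_zero_or_pos (s i) with h | h
  · rw [h]; simp
  · rw [X_mul_monomial']
    have hs : Finsupp.single i 1 + (s - Finsupp.single i 1) = s := by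
      ext j
      rcases eq_or_ne j i with rfl | hj
      · simp only [Finsupp.add_apply, Finsupp.tsub_apply, Finsupp.single_eq_same]
        omega
      · rw [Finsupp.add_apply, Finsupp.tsub_apply, Finsupp.single_apply,
          if_neg (Ne.symm hj), Nat.sub_zero, Nat.zero_add]
    rw [hs, nat_smul_poly, smul_monomial, smul_eq_mul, mul_comm]

lemma euler {m : ℕ} (q : P d) (hq : q.IsHomogeneous m) :
    ∑ i : Fin d, X i * pderiv i q = m • q := by
  conv_lhs => rw [← support_sum_monomial_coeff q]
  conv_rhs => rw [← support_sum_monomial_coeff q]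
  simp only [map_sum, Finset.mul_sum, Finset.smul_sum]
  rw [Finset.sum_comm]
  refine Finset.sum_congr rfl fun s hs => ?_
  rw [euler_monomial]
  have hd : Finsupp.degree s = m := by
    by_contra h
    exact (mem_support_iff.mp hs) (hq.coeff_eq_zero h)
  rw [hd]

lemma degree_sub_single (s : Fin d →₀ ℕ) (i : Fin d) (h : s i ≠ 0) :
    Finsupp.degree (s - Finsupp.single i 1) = Finsupp.degree s - 1 := by
  rw [← degree_univ, ← degree_univ]
  rw [← Finset.add_sum_erase _ _ (Finset.mem_univ i),
    ← Finset.add_sum_erase _ s (Finset.mem_univ i)]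
  have h1 : ∀ j ∈ Finset.univ.erase i,
      ((s - Finsupp.single i 1 : Fin d →₀ ℕ)) j = s j := by
    intro j hj
    have hj' : j ≠ i := Finset.ne_of_mem_erase hj
    rw [Finsupp.tsub_apply, Finsupp.single_apply, if_neg (Ne.symm hj'), Nat.sub_zero]
  rw [Finset.sum_congr rfl h1,
    show (∑ x ∈ Finset.univ.erase i, s x) = (Finset.univ.erase i).sum ⇑s from rfl]
  have h2 : ((s - Finsupp.single i 1 : Fin d →₀ ℕ)) i = s i - 1 := by
    rw [Finsupp.tsub_apply, Finsupp.single_eq_same]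
  rw [h2]
  omega

lemma isHom_pderiv {m : ℕ} {q : P d} (hq : q.IsHomogeneous (m + 1)) (i : Fin d) :
    (pderiv i q).IsHomogeneous m := by
  have hrep : pderiv i q = ∑ s ∈ q.support, pderiv i (monomial s (coeff s q)) := by
    conv_lhs => rw [← support_sum_monomial_coeff q]
    rw [map_sum]
  rw [hrep]
  refine IsHomogeneous.sum _ _ _ fun s hs => ?_
  rw [pderiv_monomial]
  rcases Nat.eq_zero_or_pos (s i) with h | h
  · rw [h]
    simp only [Nat.cast_zero, mul_zero, monomial_zero]
    exact isHomogeneous_zero _ _ _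
  · refine isHomogeneous_monomial _ ?_
    have hdeg : Finsupp.degree s = m + 1 := by
      by_contra hh
      exact (mem_support_iff.mp hs) (hq.coeff_eq_zero hh)
    rw [degree_sub_single s i (by omega), hdeg]
    omega

lemma lap_pderiv (i : Fin d) (q : P d) : lap (pderiv i q) = pderiv i (lap q) := by
  unfold lap
  rw [map_sum]
  refine Finset.sum_congr rfl fun j _ => ?_
  rw [pderiv_comm' j i q, pderiv_comm' j i ((pderiv j) q)]

lemma pderiv_nsq (i : Fin d) : pderiv i (nsq d) = 2 * X i := by
  unfold nsq
  rw [map_sum, Finset.sum_eq_single i (fun j _ hj => by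
      rw [pderiv_pow, pderiv_X_of_ne hj, mul_zero])
    (fun h => absurd (Finset.mem_univ i) h)]
  rw [pderiv_pow, pderiv_X_self, mul_one]
  norm_num

lemma cc_succ (m j : ℕ) : cc (m + 1) j = 2 * ((j : ℝ) - m) * cc m j := by
  unfold cc
  rcases lt_trichotomy m j with h | rfl | h
  · rw [if_pos (by omega : m + 1 ≤ j), if_pos (le_of_lt h)]
    obtain ⟨k, rfl⟩ : ∃ k, j = m + 1 + k := ⟨j - (m + 1), by omega⟩
    rw [show m + 1 + k - (m + 1) = k from by omega,
      show m + 1 + k - m = k + 1 from by omega, Nat.factorial_succ]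
    have hf : ((k.factorial : ℝ)) ≠ 0 := Nat.cast_ne_zero.mpr (Nat.factorial_ne_zero _)
    push_cast
    field_simp
    ring
  · rw [if_neg (by omega : ¬ (m + 1 ≤ m)), if_pos le_rfl]
    simp
  · rw [if_neg (by omega), if_neg (by omega)]
    simp

/-- The key polynomial identity. -/
lemma dop_nsq_pow (j : ℕ) : ∀ (m : ℕ) (q : P d), q.IsHomogeneous m → lap q = 0 →
    dop q ((nsq d) ^ j) = cc m j • ((nsq d) ^ (j - m) * q) := by
  intro m
  induction m with
  | zero =>
    intro q hq _
    have hq0 : C (coeff 0 q) = q := by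
      rw [← homogeneousComponent_zero q, homogeneousComponent_of_mem hq, if_pos rfl]
    rw [← hq0, dop_C]
    have hcc : cc 0 j = 1 := by
      unfold cc
      rw [if_pos (Nat.zero_le j)]
      simp [Nat.factorial_ne_zero]
    rw [hcc, one_smul, Nat.sub_zero, smul_eq_C_mul, mul_comm]
  | succ m ih =>
    intro q hq hlap
    have key : ((m + 1 : ℕ) : ℝ) • dop q ((nsq d) ^ j)
        = ((m + 1 : ℕ) : ℝ) • (cc (m + 1) j • ((nsq d) ^ (j - (m + 1)) * q)) := by
      rw [← nat_smul_poly, ← dop_nsmul, ← euler q hq, dop_sum]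
      have step : ∀ i : Fin d, dop (X i * pderiv i q) ((nsq d) ^ j)
          = cc m j • (pderiv i ((nsq d) ^ (j - m)) * pderiv i q
              + (nsq d) ^ (j - m) * pderiv i (pderiv i q)) := by
        intro i
        rw [dop_X_mul, ih (pderiv i q) (isHom_pderiv hq i)
          (by rw [lap_pderiv, hlap, map_zero]), Derivation.map_smul]
        congr 1
        rw [pderiv_mul]
      rw [Finset.sum_congr rfl fun i _ => step i, ← Finset.smul_sum]
      have hsum : ∑ i : Fin d, (pderiv i ((nsq d) ^ (j - m)) * pderiv i q
          + (nsq d) ^ (j - m) * pderiv i (pderiv i q))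
          = ((2 * (j - m) * (m + 1) : ℕ) : ℝ) • ((nsq d) ^ (j - m - 1) * q) := by
        rw [Finset.sum_add_distrib]
        have hlapterm : ∑ i : Fin d, (nsq d) ^ (j - m) * pderiv i (pderiv i q) = 0 := by
          rw [← Finset.mul_sum, show (∑ i : Fin d, pderiv i (pderiv i q)) = lap q from rfl,
            hlap, mul_zero]
        rw [hlapterm, add_zero]
        have h1 : ∀ i : Fin d, pderiv i ((nsq d) ^ (j - m)) * pderiv i q
            = ((2 * (j - m) : ℕ) : ℝ) • ((nsq d) ^ (j - m - 1) * (X i * pderiv i q)) := by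
          intro i
          rw [pderiv_pow, pderiv_nsq, smul_eq_C_mul, C_eq_coe_nat]
          push_cast
          ring
        rw [Finset.sum_congr rfl fun i _ => h1 i, ← Finset.smul_sum, ← Finset.mul_sum,
          euler q hq, mul_smul_comm, nat_smul_poly (m + 1), smul_smul]
        congr 1
        push_cast
        ring
      rw [hsum, smul_smul, cc_succ]
      rw [show j - m - 1 = j - (m + 1) from by omega]
      rw [smul_smul]
      congr 1
      rcases le_or_gt m j with h | h
      · have hc : ((j - m : ℕ) : ℝ) = (j : ℝ) - m := by
          push_cast [Nat.cast_sub h]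
          ring
        push_cast [hc]
        ring
      · have hc : cc m j = 0 := by unfold cc; rw [if_neg (by omega)]
        rw [hc]
        push_cast
        ring
    have hmne : ((m + 1 : ℕ) : ℝ) ≠ 0 := by positivity
    have h2 := congrArg (fun z : P d => ((m + 1 : ℕ) : ℝ)⁻¹ • z) key
    have hmne' : ((m : ℝ) + 1) ≠ 0 := by positivity
    simpa [smul_smul, ← mul_assoc, inv_mul_cancel₀ hmne'] using h2

lemma hasFDerivAt_evalE (p : P d) (x : Ed d) :
    HasFDerivAt (evalE p)
      (∑ i : Fin d, evalE (pderiv i p) x • (EuclideanSpace.proj i : Ed d →L[ℝ] ℝ)) x := by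
  induction p using MvPolynomial.induction_on with
  | C a =>
    have hfun : (evalE (C a : P d)) = fun _ : Ed d => a := by
      funext y; simp [evalE]
    have hder : (∑ i : Fin d, evalE (pderiv i (C a : P d)) x
        • (EuclideanSpace.proj i : Ed d →L[ℝ] ℝ)) = 0 := by
      simp [pderiv_C, evalE]
    rw [hfun, hder]
    exact hasFDerivAt_const a x
  | add p q hp hq =>
    have hfun : evalE (p + q) = fun y : Ed d => evalE p y + evalE q y := by
      funext y; simp [evalE]
    have hder : (∑ i : Fin d, evalE (pderiv i (p + q)) x
          • (EuclideanSpace.proj i : Ed d →L[ℝ] ℝ))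
        = (∑ i : Fin d, evalE (pderiv i p) x • (EuclideanSpace.proj i : Ed d →L[ℝ] ℝ))
          + ∑ i : Fin d, evalE (pderiv i q) x • (EuclideanSpace.proj i : Ed d →L[ℝ] ℝ) := by
      rw [← Finset.sum_add_distrib]
      refine Finset.sum_congr rfl fun i _ => ?_
      rw [map_add, ← add_smul]
      congr 1
      simp [evalE]
    rw [hfun, hder]
    exact hp.add hq
  | mul_X p i hp =>
    have hfun : evalE (p * X i) = fun y : Ed d => evalE p y * y i := by
      funext y; simp [evalE]
    have hproj : HasFDerivAt (fun y : Ed d => y i) (EuclideanSpace.proj (𝕜 := ℝ) i) x :=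
      (EuclideanSpace.proj (𝕜 := ℝ) i).hasFDerivAt
    have h := hp.mul hproj
    rw [hfun]
    have hcoeff : ∀ k : Fin d, evalE (pderiv k (p * X i)) x
        = evalE (pderiv k p) x * x i + (if k = i then evalE p x else 0) := by
      intro k
      rw [pderiv_mul]
      rcases eq_or_ne k i with rfl | hk
      · rw [pderiv_X_self, if_pos rfl]
        simp [evalE]
      · rw [pderiv_X_of_ne (Ne.symm hk), if_neg hk]
        simp [evalE]
    have hder : (∑ k : Fin d, evalE (pderiv k (p * X i)) x
          • (EuclideanSpace.proj k : Ed d →L[ℝ] ℝ))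
        = evalE p x • (EuclideanSpace.proj i : Ed d →L[ℝ] ℝ)
          + x i • ∑ k : Fin d, evalE (pderiv k p) x
              • (EuclideanSpace.proj k : Ed d →L[ℝ] ℝ) := by
      refine ContinuousLinearMap.ext fun v => ?_
      simp only [ContinuousLinearMap.sum_apply, ContinuousLinearMap.smul_apply,
        ContinuousLinearMap.add_apply, PiLp.proj_apply, smul_eq_mul]
      rw [Finset.sum_congr rfl (fun k (_ : k ∈ Finset.univ) => by
        rw [hcoeff k, add_mul, ite_mul, zero_mul])]
      rw [Finset.sum_add_distrib, Finset.sum_ite_eq' Finset.univ i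
        (fun k => evalE p x * v k), if_pos (Finset.mem_univ i), Finset.mul_sum]
      rw [add_comm]
      congr 1
      exact Finset.sum_congr rfl fun k _ => by ring
    rw [hder]
    exact h

lemma pdF_evalE (j : Fin d) (p : P d) : pdF j (evalE p) = evalE (pderiv j p) := by
  funext x
  show fderiv ℝ (evalE p) x (EuclideanSpace.single j 1) = _
  rw [(hasFDerivAt_evalE p x).fderiv, ContinuousLinearMap.sum_apply]
  have h1 : ∀ i : Fin d,
      (evalE (pderiv i p) x • (EuclideanSpace.proj i : Ed d →L[ℝ] ℝ))
          (EuclideanSpace.single j 1)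
        = if i = j then evalE (pderiv i p) x else 0 := by
    intro i
    rw [ContinuousLinearMap.smul_apply, smul_eq_mul, PiLp.proj_apply,
      EuclideanSpace.single_apply]
    split_ifs with hh
    · rw [mul_one]
    · rw [mul_zero]
  rw [Finset.sum_congr rfl fun i _ => h1 i, Finset.sum_ite_eq' Finset.univ j
    (fun i => evalE (pderiv i p) x), if_pos (Finset.mem_univ j)]

lemma iterF_evalE (j : Fin d) (n : ℕ) (p : P d) :
    (pdF j)^[n] (evalE p) = evalE ((fun q : P d => pderiv j q)^[n] p) := by
  induction n generalizing p with
  | zero => rfl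
  | succ n ih =>
    rw [Function.iterate_succ_apply, Function.iterate_succ_apply, pdF_evalE, ih]

lemma Ff_evalE (l : List (Fin d)) (s : Fin d →₀ ℕ) (p : P d) :
    (l.map (fun j => (pdF j)^[s j])).foldr (fun g h => g ∘ h) id (evalE p)
      = evalE ((l.map (fun j => (fun q : P d => pderiv j q)^[s j])).foldr
          (fun g h => g ∘ h) id p) := by
  induction l with
  | nil => rfl
  | cons a l ih =>
    show (pdF a)^[s a] ((l.map (fun j => (pdF j)^[s j])).foldr (fun g h => g ∘ h) id (evalE p))
      = _
    rw [ih, iterF_evalE]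
    rfl

lemma mpdF_evalE (s : Fin d →₀ ℕ) (p : P d) : mpdF s (evalE p) = evalE (mpderiv s p) :=
  Ff_evalE _ _ _

lemma dopF_evalE (q p : P d) (x : Ed d) : dopF q (evalE p) x = evalE (dop q p) x := by
  unfold dopF dop
  have h1 : evalE ((AddMonoidAlgebra.coeff q).sum fun s c => c • mpderiv s p) x
      = (AddMonoidAlgebra.coeff q).sum fun s c => c * evalE (mpderiv s p) x := by
    unfold evalE
    rw [map_finsuppSum]
    exact Finsupp.sum_congr fun s _ => smul_eval _ _ _
  rw [h1]
  exact Finsupp.sum_congr fun s _ => by rw [mpdF_evalE]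

lemma rD_iter (j : ℕ) : ∀ (m : ℕ) (ρ : ℝ), 0 < ρ →
    rD^[m] (fun t : ℝ => t ^ (2 * j)) ρ = cc m j * ρ ^ (2 * j - 2 * m) := by
  intro m
  induction m with
  | zero =>
    intro ρ hρ
    have hcc : cc 0 j = 1 := by
      unfold cc; rw [if_pos (Nat.zero_le j)]; simp [Nat.factorial_ne_zero]
    simp [hcc]
  | succ m ih =>
    intro ρ hρ
    rw [Function.iterate_succ_apply']
    show deriv (rD^[m] fun t : ℝ => t ^ (2 * j)) ρ / ρ = _
    have hev : (rD^[m] fun t : ℝ => t ^ (2 * j)) =ᶠ[nhds ρ]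
        (fun t => cc m j * t ^ (2 * j - 2 * m)) := by
      filter_upwards [isOpen_Ioi.mem_nhds (show ρ ∈ Set.Ioi (0:ℝ) from hρ)] with t ht
      exact ih t ht
    rw [hev.deriv_eq, deriv_const_mul_field, deriv_pow_field]
    rcases lt_trichotomy m j with h | heq | h
    · have hpow : ρ ^ (2 * j - 2 * m - 1) = ρ ^ (2 * j - 2 * (m + 1)) * ρ := by
        rw [← pow_succ]
        congr 1
        omega
      have hcast : ((2 * j - 2 * m : ℕ) : ℝ) = 2 * ((j : ℝ) - m) := by
        rw [Nat.cast_sub (by omega : 2 * m ≤ 2 * j)]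
        push_cast
        ring
      rw [hpow, cc_succ, hcast]
      field_simp
    · subst heq
      have h0 : ((2 * m - 2 * m : ℕ) : ℝ) = 0 := by norm_num
      rw [h0, cc_succ]
      simp
    · have hc : cc m j = 0 := by unfold cc; rw [if_neg (by omega)]
      have hc2 : cc (m + 1) j = 0 := by unfold cc; rw [if_neg (by omega)]
      simp [hc, hc2]

lemma eval_nsq (y : Ed d) : eval (fun i => y i) (nsq d) = ‖y‖ ^ 2 := by
  rw [EuclideanSpace.norm_eq, Real.sq_sqrt (Finset.sum_nonneg fun i _ => sq_nonneg _)]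
  unfold nsq
  rw [map_sum]
  refine Finset.sum_congr rfl fun i _ => ?_
  rw [Real.norm_eq_abs, sq_abs]
  simp

lemma norm_pow_eq_evalE (y : Ed d) (j : ℕ) : ‖y‖ ^ (2 * j) = evalE ((nsq d) ^ j) y := by
  unfold evalE
  rw [map_pow, eval_nsq, ← pow_mul]

end Stmt15Aux

/-- `q(∇) ρ^{2j} = [((1/ρ) d/dρ)^m ρ^{2j}] q(x)`, with explicit values of the
iterated radial operator. -/
theorem stmt15 (d m j : ℕ) (q : MvPolynomial (Fin d) ℝ)
    (hqhom : q.IsHomogeneous m) (hqharm : lap q = 0) :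
    (∀ x : Ed d, x ≠ 0 →
      dopF q (fun x : Ed d => ‖x‖ ^ (2 * j)) x
        = (rD^[m] (fun ρ : ℝ => ρ ^ (2 * j))) ‖x‖ * evalE q x) ∧
    (j < m → ∀ ρ : ℝ, 0 < ρ → (rD^[m] (fun ρ : ℝ => ρ ^ (2 * j))) ρ = 0) ∧
    (m ≤ j → ∀ ρ : ℝ, 0 < ρ →
      (rD^[m] (fun ρ : ℝ => ρ ^ (2 * j))) ρ
        = (2 ^ m * (j.factorial : ℝ) / ((j - m).factorial : ℝ)) * ρ ^ (2 * j - 2 * m)) := by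
  classical
  have hfun : (fun y : Ed d => ‖y‖ ^ (2 * j)) = evalE ((nsq d) ^ j) := by
    funext y
    exact Stmt15Aux.norm_pow_eq_evalE y j
  refine ⟨?_, ?_, ?_⟩
  · intro x hx
    have hxpos : (0:ℝ) < ‖x‖ := norm_pos_iff.mpr hx
    rw [hfun, Stmt15Aux.dopF_evalE, Stmt15Aux.dop_nsq_pow j m q hqhom hqharm,
      Stmt15Aux.rD_iter j m ‖x‖ hxpos]
    unfold evalE
    rw [smul_eval, map_mul, map_pow, Stmt15Aux.eval_nsq, ← pow_mul,
      show 2 * (j - m) = 2 * j - 2 * m from by omega]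
    ring
  · intro hjm ρ hρ
    rw [Stmt15Aux.rD_iter j m ρ hρ,
      show Stmt15Aux.cc m j = 0 from by unfold Stmt15Aux.cc; rw [if_neg (by omega)],
      zero_mul]
  · intro hmj ρ hρ
    rw [Stmt15Aux.rD_iter j m ρ hρ]
    unfold Stmt15Aux.cc
    rw [if_pos hmj]
end
end
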